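/- arXiv:1008.1186 — 2 statements merged into one kernel-verified Lean document; each statement's English description precedes it below -/
import Mathlib

section
/- Let ABC be a non-degenerate triangle in the Euclidean plane and let P be a point not lying on any of the lines BC, CA, AB. Let L be the intersection of line AP with line BC, M the intersection of line BP with line CA, and N the intersection of line CP with line AB (the feet of the Cevians through P), and assume these intersections exist and are not vertices of the triangle. Let Q be the Miquel point, i.e. a common point of the circles AMN, BNL, CLM. Let U be the second intersection of line AP with circle AMN, V the second intersection of line BP with circle BNL, and W the second intersection of line CP with circle CLM. Then the five points U, V, W, P, Q are concyclic. -/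
open EuclideanGeometry

local notation "Pt" => EuclideanSpace ℝ (Fin 2)

open RealInnerProductSpace Real

instance : Fact (Module.finrank ℝ Pt = 2) := ⟨finrank_euclideanSpace_fin⟩
noncomputable instance : Module.Oriented ℝ Pt (Fin 2) :=
  ⟨Module.Basis.orientation (EuclideanSpace.basisFun (Fin 2) ℝ).toBasis⟩

private lemma colperm3 {a b c : Pt} (h : Collinear ℝ ({a, b, c} : Set Pt)) :
    Collinear ℝ ({c, b, a} : Set Pt) :=
  h.subset (by intro x hx; simp at hx ⊢; tauto)

private lemma colperm3' {a b c : Pt} (h : Collinear ℝ ({a, b, c} : Set Pt)) :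
    Collinear ℝ ({b, a, c} : Set Pt) :=
  h.subset (by intro x hx; simp at hx ⊢; tauto)

-- three distinct collinear points cannot lie on one sphere
private lemma not_on_sphere {s : Sphere Pt} {a b c : Pt} (ha : a ∈ s) (hb : b ∈ s) (hc : c ∈ s)
    (hab : a ≠ b) (hac : a ≠ c) (hbc : b ≠ c) (h : Collinear ℝ ({a, b, c} : Set Pt)) : False := by
  have hcos : Cospherical ({a, b, c} : Set Pt) := by
    refine ⟨s.center, s.radius, ?_⟩
    intro p hp
    rcases hp with rfl | rfl | rfl <;> assumption
  exact (affineIndependent_iff_not_collinear_set.1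
    (hcos.affineIndependent_of_ne hab hac hbc)) h

private lemma exists_sphere3 {a b c : Pt} (h : ¬Collinear ℝ ({a, b, c} : Set Pt)) :
    ∃ s : Sphere Pt, a ∈ s ∧ b ∈ s ∧ c ∈ s := by
  let t : Affine.Triangle ℝ Pt := ⟨![a, b, c], affineIndependent_iff_not_collinear_set.2 h⟩
  exact ⟨t.circumsphere, t.mem_circumsphere 0, t.mem_circumsphere 1, t.mem_circumsphere 2⟩

private lemma sphere_eq3 {a b c : Pt} (h : ¬Collinear ℝ ({a, b, c} : Set Pt)) {s₁ s₂ : Sphere Pt}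
    (ha₁ : a ∈ s₁) (hb₁ : b ∈ s₁) (hc₁ : c ∈ s₁)
    (ha₂ : a ∈ s₂) (hb₂ : b ∈ s₂) (hc₂ : c ∈ s₂) : s₁ = s₂ := by
  let t : Affine.Triangle ℝ Pt := ⟨![a, b, c], affineIndependent_iff_not_collinear_set.2 h⟩
  have hspan : affineSpan ℝ (Set.range t.points) = ⊤ := by
    rw [t.independent.affineSpan_eq_top_iff_card_eq_finrank_add_one]
    simp [finrank_euclideanSpace_fin]
  have key : ∀ s : Sphere Pt, a ∈ s → b ∈ s → c ∈ s → s = t.circumsphere := by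
    intro s hha hhb hhc
    refine t.circumsphere_unique_dist_eq.2 s ⟨hspan ▸ AffineSubspace.mem_top ℝ _ _, ?_⟩
    rintro p ⟨i, rfl⟩
    fin_cases i <;> simpa [t] using ‹_›
  rw [key s₁ ha₁ hb₁ hc₁, key s₂ ha₂ hb₂ hc₂]

private theorem halfchain (s : Sphere Pt) (A P N Q U : Pt)
    (hA : A ∈ s) (hN : N ∈ s) (hQ : Q ∈ s) (hU : U ∈ s)
    (hU1 : U ∈ line[ℝ, A, P])
    (hU3 : ∀ X : Pt, X ∈ line[ℝ, A, P] → X ∈ s → X = A ∨ X = U)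
    (hPA : P ≠ A) (hNA : N ≠ A) (hNQ : N ≠ Q) (hUP : U ≠ P) (hUQ : U ≠ Q) :
    (2 : ℤ) • ∡ Q U P = (2 : ℤ) • ∡ Q N A := by
  by_cases hUA : U = A
  · subst hUA
    have hperp : ⟪P -ᵥ U, U -ᵥ s.center⟫ = 0 := by
      by_contra hne
      have hmem : s.secondInter U (P -ᵥ U) ∈ s := (Sphere.secondInter_mem _).2 hA
      have hcol : Collinear ℝ ({U, P, s.secondInter U (P -ᵥ U)} : Set Pt) :=
        Sphere.secondInter_collinear s U P
      have hline : s.secondInter U (P -ᵥ U) ∈ line[ℝ, U, P] :=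
        hcol.mem_affineSpan_of_mem_of_ne (Set.mem_insert _ _)
          (Set.mem_insert_of_mem _ (Set.mem_insert _ _))
          (Set.mem_insert_of_mem _ (Set.mem_insert_of_mem _ rfl)) hPA.symm
      have h2 : s.secondInter U (P -ᵥ U) = U := by
        rcases hU3 _ hline hmem with h | h <;> exact h
      rw [Sphere.secondInter_eq_self_iff] at h2
      exact hne h2
    have hcU : s.center ≠ U := by
      intro hc
      have h1 : dist U s.center = s.radius := hA
      have h2 : dist N s.center = s.radius := hN
      rw [← hc, dist_self] at h1
      have hN' : N = s.center := dist_eq_zero.1 (by rw [h2, ← h1])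
      exact hNA (hN'.trans hc)
    have hstep2 : (2 : ℤ) • ∡ s.center U P = (π : Real.Angle) := by
      rw [Real.Angle.two_zsmul_eq_pi_iff]
      have hinner : ⟪s.center -ᵥ U, P -ᵥ U⟫ = 0 := by
        rw [real_inner_comm]
        rw [show s.center -ᵥ U = -(U -ᵥ s.center) by rw [neg_vsub_eq_vsub_rev],
          inner_neg_right, hperp, neg_zero]
      have := (Module.Oriented.positiveOrientation
          (M := Pt)).eq_zero_or_oangle_eq_iff_inner_eq_zero.2 hinner
      rcases this with h | h | h | h
      · exact absurd h (vsub_ne_zero.2 hcU)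
      · exact absurd h (vsub_ne_zero.2 hPA)
      · exact Or.inl h
      · exact Or.inr h
    have hstep3 : (2 : ℤ) • ∡ Q U s.center + (2 : ℤ) • ∡ U N Q = (π : Real.Angle) :=
      Sphere.two_zsmul_oangle_center_add_two_zsmul_oangle_eq_pi hA hN hQ hNA hNQ hUQ
    have hadd : ∡ Q U s.center + ∡ s.center U P = ∡ Q U P :=
      oangle_add hUQ.symm hcU hPA
    calc (2 : ℤ) • ∡ Q U P = (2 : ℤ) • ∡ Q U s.center + (2 : ℤ) • ∡ s.center U P := by
          rw [← smul_add, hadd]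
      _ = ((π : Real.Angle) - (2 : ℤ) • ∡ U N Q) + (π : Real.Angle) := by
          rw [hstep2, eq_sub_iff_add_eq.2 hstep3]
      _ = -((2 : ℤ) • ∡ U N Q) := by
          rw [sub_add_eq_add_sub, Real.Angle.coe_pi_add_coe_pi, zero_sub]
      _ = (2 : ℤ) • ∡ Q N U := by rw [oangle_rev Q N U, smul_neg, neg_neg]
  · calc (2 : ℤ) • ∡ Q U P = (2 : ℤ) • ∡ Q U A := by
          refine Collinear.two_zsmul_oangle_eq_right ?_ hUP.symm (Ne.symm hUA)
          have h : Collinear ℝ ({U, A, P} : Set Pt) := collinear_insert_of_mem_affineSpan_pair hU1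
          exact h.subset (by intro x hx; simp at hx ⊢; tauto)
    _ = (2 : ℤ) • ∡ Q N A := Sphere.two_zsmul_oangle_eq hQ hU hN hA hUQ hUA hNQ hNA

private theorem link (s₁ s₂ s₃ : Sphere Pt) (X₁ X₂ X₃ P Q n m l U₁ U₂ : Pt)
    (hX₁ : X₁ ∈ s₁) (hn₁ : n ∈ s₁) (hm₁ : m ∈ s₁) (hQ₁ : Q ∈ s₁)
    (hX₂ : X₂ ∈ s₂) (hn₂ : n ∈ s₂) (hl₂ : l ∈ s₂) (hQ₂ : Q ∈ s₂)
    (hX₃ : X₃ ∈ s₃) (hm₃ : m ∈ s₃) (hl₃ : l ∈ s₃) (hQ₃ : Q ∈ s₃)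
    (hcn : Collinear ℝ ({X₁, n, X₂} : Set Pt))
    (hcm : Collinear ℝ ({X₃, m, X₁} : Set Pt))
    (hcl : Collinear ℝ ({X₃, l, X₂} : Set Pt))
    (hU₁1 : U₁ ∈ line[ℝ, X₁, P]) (hU₁2 : U₁ ∈ s₁)
    (hU₁3 : ∀ X : Pt, X ∈ line[ℝ, X₁, P] → X ∈ s₁ → X = X₁ ∨ X = U₁)
    (hU₂1 : U₂ ∈ line[ℝ, X₂, P]) (hU₂2 : U₂ ∈ s₂)
    (hU₂3 : ∀ X : Pt, X ∈ line[ℝ, X₂, P] → X ∈ s₂ → X = X₂ ∨ X = U₂)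
    (hPX₁ : P ≠ X₁) (hPX₂ : P ≠ X₂)
    (hnX₁ : n ≠ X₁) (hnX₂ : n ≠ X₂) (hmX₁ : m ≠ X₁) (hmX₃ : m ≠ X₃)
    (hlX₂ : l ≠ X₂) (hlX₃ : l ≠ X₃) (hmn : m ≠ n) (hln : l ≠ n)
    (hU₁P : U₁ ≠ P) (hU₁Q : U₁ ≠ Q) (hU₂P : U₂ ≠ P) (hU₂Q : U₂ ≠ Q) :
    (2 : ℤ) • ∡ Q U₁ P = (2 : ℤ) • ∡ Q U₂ P := by
  by_cases hnQ : n = Q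
  · have hmQ : m ≠ Q := fun h => hmn (h.trans hnQ.symm)
    have hlQ : l ≠ Q := fun h => hln (h.trans hnQ.symm)
    calc (2 : ℤ) • ∡ Q U₁ P = (2 : ℤ) • ∡ Q m X₁ :=
          halfchain s₁ X₁ P m Q U₁ hX₁ hm₁ hQ₁ hU₁2 hU₁1 hU₁3 hPX₁ hmX₁ hmQ hU₁P hU₁Q
      _ = (2 : ℤ) • ∡ Q m X₃ :=
          Collinear.two_zsmul_oangle_eq_right (colperm3 hcm) hmX₁.symm hmX₃.symm
      _ = (2 : ℤ) • ∡ Q l X₃ :=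
          Sphere.two_zsmul_oangle_eq hQ₃ hm₃ hl₃ hX₃ hmQ hmX₃ hlQ hlX₃
      _ = (2 : ℤ) • ∡ Q l X₂ :=
          Collinear.two_zsmul_oangle_eq_right hcl hlX₃.symm hlX₂.symm
      _ = (2 : ℤ) • ∡ Q U₂ P :=
          (halfchain s₂ X₂ P l Q U₂ hX₂ hl₂ hQ₂ hU₂2 hU₂1 hU₂3 hPX₂ hlX₂ hlQ hU₂P hU₂Q).symm
  · calc (2 : ℤ) • ∡ Q U₁ P = (2 : ℤ) • ∡ Q n X₁ :=
          halfchain s₁ X₁ P n Q U₁ hX₁ hn₁ hQ₁ hU₁2 hU₁1 hU₁3 hPX₁ hnX₁ hnQ hU₁P hU₁Q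
      _ = (2 : ℤ) • ∡ Q n X₂ :=
          Collinear.two_zsmul_oangle_eq_right hcn hnX₁.symm hnX₂.symm
      _ = (2 : ℤ) • ∡ Q U₂ P :=
          (halfchain s₂ X₂ P n Q U₂ hX₂ hn₂ hQ₂ hU₂2 hU₂1 hU₂3 hPX₂ hnX₂ hnQ hU₂P hU₂Q).symm

-- non-collinearity of Q, U, P
private theorem ncQUP (s : Sphere Pt) (A P U Q : Pt)
    (hU1 : U ∈ line[ℝ, A, P])
    (hU3 : ∀ X : Pt, X ∈ line[ℝ, A, P] → X ∈ s → X = A ∨ X = U)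
    (hQ : Q ∈ s) (hQA : Q ≠ A) (hUQ : U ≠ Q) (hUP : U ≠ P) :
    ¬Collinear ℝ ({Q, U, P} : Set Pt) := by
  intro hc
  have hQmem : Q ∈ line[ℝ, U, P] :=
    hc.mem_affineSpan_of_mem_of_ne (Set.mem_insert_of_mem _ (Set.mem_insert _ _))
      (Set.mem_insert_of_mem _ (Set.mem_insert_of_mem _ rfl)) (Set.mem_insert _ _) hUP
  have hle : line[ℝ, U, P] ≤ line[ℝ, A, P] := by
    rw [affineSpan_le]
    exact Set.insert_subset_iff.2 ⟨hU1,
      Set.singleton_subset_iff.2 (right_mem_affineSpan_pair ℝ A P)⟩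
  rcases hU3 Q (hle hQmem) hQ with h | h
  · exact hQA h
  · exact hUQ h.symm

/-- Let `L`, `M`, `N` be the feet of the Cevians through `P` in a non-degenerate triangle
`ABC`, let `Q` be the Miquel point (common point of circles `AMN`, `BNL`, `CLM`), and let
`U`, `V`, `W` be the second intersections of the Cevian lines `AP`, `BP`, `CP` with the
circles `AMN`, `BNL`, `CLM` respectively.  Then `U`, `V`, `W`, `P`, `Q` are concyclic. -/
theorem concyclic_UVWPQ (A B C P L M N Q U V W : Pt)
    (hABC : AffineIndependent ℝ ![A, B, C])
    (hPa : P ∉ line[ℝ, B, C]) (hPb : P ∉ line[ℝ, C, A]) (hPc : P ∉ line[ℝ, A, B])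
    -- Cevian feet
    (hL1 : L ∈ line[ℝ, A, P]) (hL2 : L ∈ line[ℝ, B, C]) (hLB : L ≠ B) (hLC : L ≠ C)
    (hM1 : M ∈ line[ℝ, B, P]) (hM2 : M ∈ line[ℝ, C, A]) (hMC : M ≠ C) (hMA : M ≠ A)
    (hN1 : N ∈ line[ℝ, C, P]) (hN2 : N ∈ line[ℝ, A, B]) (hNA : N ≠ A) (hNB : N ≠ B)
    -- the three Miquel circles
    (sA sB sC : Sphere Pt)
    (hsA1 : A ∈ sA) (hsA2 : M ∈ sA) (hsA3 : N ∈ sA)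
    (hsB1 : B ∈ sB) (hsB2 : N ∈ sB) (hsB3 : L ∈ sB)
    (hsC1 : C ∈ sC) (hsC2 : L ∈ sC) (hsC3 : M ∈ sC)
    -- the Miquel point
    (hQ1 : Q ∈ sA) (hQ2 : Q ∈ sB) (hQ3 : Q ∈ sC)
    -- second intersections of the Cevian lines with the circles
    (hU1 : U ∈ line[ℝ, A, P]) (hU2 : U ∈ sA)
    (hU3 : ∀ X : Pt, X ∈ line[ℝ, A, P] → X ∈ sA → X = A ∨ X = U)
    (hV1 : V ∈ line[ℝ, B, P]) (hV2 : V ∈ sB)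
    (hV3 : ∀ X : Pt, X ∈ line[ℝ, B, P] → X ∈ sB → X = B ∨ X = V)
    (hW1 : W ∈ line[ℝ, C, P]) (hW2 : W ∈ sC)
    (hW3 : ∀ X : Pt, X ∈ line[ℝ, C, P] → X ∈ sC → X = C ∨ X = W) :
    Concyclic ({U, V, W, P, Q} : Set Pt) := by
  -- basic noncollinearity and distinctness
  have hABC' : ¬Collinear ℝ ({A, B, C} : Set Pt) :=
    affineIndependent_iff_not_collinear_set.1 hABC
  have hAB : A ≠ B := by
    intro h
    apply hABC'
    rw [h]
    refine Collinear.subset ?_ (collinear_pair ℝ B C)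
    intro x hx
    simp at hx ⊢
    tauto
  have hAC : A ≠ C := by
    intro h
    apply hABC'
    rw [h]
    refine Collinear.subset ?_ (collinear_pair ℝ B C)
    intro x hx
    simp at hx ⊢
    tauto
  have hBC : B ≠ C := by
    intro h
    apply hABC'
    rw [h]
    refine Collinear.subset ?_ (collinear_pair ℝ A C)
    intro x hx
    simp at hx ⊢
    tauto
  have hPA : P ≠ A := fun h => hPc (h ▸ left_mem_affineSpan_pair ℝ A B)
  have hPB : P ≠ B := fun h => hPa (h ▸ left_mem_affineSpan_pair ℝ B C)
  have hPC : P ≠ C := fun h => hPb (h ▸ left_mem_affineSpan_pair ℝ C A)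
  -- collinear triples
  have colANB : Collinear ℝ ({A, N, B} : Set Pt) :=
    colperm3' (collinear_insert_of_mem_affineSpan_pair hN2)
  have colCMA : Collinear ℝ ({C, M, A} : Set Pt) :=
    colperm3' (collinear_insert_of_mem_affineSpan_pair hM2)
  have colBLC : Collinear ℝ ({B, L, C} : Set Pt) :=
    colperm3' (collinear_insert_of_mem_affineSpan_pair hL2)
  have colAMC : Collinear ℝ ({A, M, C} : Set Pt) := colperm3 colCMA
  have colBNA : Collinear ℝ ({B, N, A} : Set Pt) := colperm3 colANB
  have colCLB : Collinear ℝ ({C, L, B} : Set Pt) := colperm3 colBLC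
  -- distinctness of the Cevian feet
  have hLM : L ≠ M := by
    intro h
    have hL2' : L ∈ line[ℝ, C, B] := by rwa [Set.pair_comm C B]
    have hb : B ∈ line[ℝ, L, C] :=
      (collinear_insert_of_mem_affineSpan_pair hL2').mem_affineSpan_of_mem_of_ne
        (Set.mem_insert _ _) (Set.mem_insert_of_mem _ (Set.mem_insert _ _))
        (Set.mem_insert_of_mem _ (Set.mem_insert_of_mem _ rfl)) hLC
    have ha : A ∈ line[ℝ, L, C] :=
      (collinear_insert_of_mem_affineSpan_pair (h ▸ hM2)).mem_affineSpan_of_mem_of_ne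
        (Set.mem_insert _ _) (Set.mem_insert_of_mem _ (Set.mem_insert _ _))
        (Set.mem_insert_of_mem _ (Set.mem_insert_of_mem _ rfl)) hLC
    exact hABC' ((collinear_insert_insert_of_mem_affineSpan_pair hb ha).subset
      (by intro x hx; simp at hx ⊢; tauto))
  have hLN : L ≠ N := by
    intro h
    have hN2' : N ∈ line[ℝ, B, A] := by rwa [Set.pair_comm B A]
    have hc : C ∈ line[ℝ, L, B] :=
      (collinear_insert_of_mem_affineSpan_pair hL2).mem_affineSpan_of_mem_of_ne
        (Set.mem_insert _ _) (Set.mem_insert_of_mem _ (Set.mem_insert _ _))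
        (Set.mem_insert_of_mem _ (Set.mem_insert_of_mem _ rfl)) hLB
    have ha : A ∈ line[ℝ, L, B] :=
      (collinear_insert_of_mem_affineSpan_pair (h ▸ hN2')).mem_affineSpan_of_mem_of_ne
        (Set.mem_insert _ _) (Set.mem_insert_of_mem _ (Set.mem_insert _ _))
        (Set.mem_insert_of_mem _ (Set.mem_insert_of_mem _ rfl)) hLB
    exact hABC' ((collinear_insert_insert_of_mem_affineSpan_pair hc ha).subset
      (by intro x hx; simp at hx ⊢; tauto))
  have hMN : M ≠ N := by
    intro h
    have hM2' : M ∈ line[ℝ, A, C] := by rwa [Set.pair_comm A C]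
    have hc : C ∈ line[ℝ, M, A] :=
      (collinear_insert_of_mem_affineSpan_pair hM2').mem_affineSpan_of_mem_of_ne
        (Set.mem_insert _ _) (Set.mem_insert_of_mem _ (Set.mem_insert _ _))
        (Set.mem_insert_of_mem _ (Set.mem_insert_of_mem _ rfl)) hMA
    have hb : B ∈ line[ℝ, M, A] :=
      (collinear_insert_of_mem_affineSpan_pair (h ▸ hN2)).mem_affineSpan_of_mem_of_ne
        (Set.mem_insert _ _) (Set.mem_insert_of_mem _ (Set.mem_insert _ _))
        (Set.mem_insert_of_mem _ (Set.mem_insert_of_mem _ rfl)) hMA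
    exact hABC' ((collinear_insert_insert_of_mem_affineSpan_pair hc hb).subset
      (by intro x hx; simp at hx ⊢; tauto))
  -- Q is not a vertex
  have hQA : Q ≠ A := by
    intro h
    exact not_on_sphere (h ▸ hQ2) hsB2 hsB1 hNA.symm hAB hNB colANB
  have hQB : Q ≠ B := by
    intro h
    exact not_on_sphere (h ▸ hQ3) hsC2 hsC1 hLB.symm hBC hLC colBLC
  have hQC : Q ≠ C := by
    intro h
    exact not_on_sphere (h ▸ hQ1) hsA2 hsA1 hMC.symm hAC.symm hMA colCMA
  -- links
  have linkUV : U ≠ P → U ≠ Q → V ≠ P → V ≠ Q →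
      (2 : ℤ) • ∡ Q U P = (2 : ℤ) • ∡ Q V P := fun h1 h2 h3 h4 =>
    link sA sB sC A B C P Q N M L U V hsA1 hsA3 hsA2 hQ1 hsB1 hsB2 hsB3 hQ2
      hsC1 hsC3 hsC2 hQ3 colANB colCMA colCLB hU1 hU2 hU3 hV1 hV2 hV3
      hPA hPB hNA hNB hMA hMC hLB hLC hMN hLN h1 h2 h3 h4
  have linkUW : U ≠ P → U ≠ Q → W ≠ P → W ≠ Q →
      (2 : ℤ) • ∡ Q U P = (2 : ℤ) • ∡ Q W P := fun h1 h2 h3 h4 =>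
    link sA sC sB A C B P Q M N L U W hsA1 hsA2 hsA3 hQ1 hsC1 hsC3 hsC2 hQ3
      hsB1 hsB2 hsB3 hQ2 colAMC colBNA colBLC hU1 hU2 hU3 hW1 hW2 hW3
      hPA hPC hMA hMC hNA hNB hLC hLB hMN.symm (fun h => hLM (h.symm ▸ rfl)) h1 h2 h3 h4
  have linkVW : V ≠ P → V ≠ Q → W ≠ P → W ≠ Q →
      (2 : ℤ) • ∡ Q V P = (2 : ℤ) • ∡ Q W P := fun h1 h2 h3 h4 =>
    link sB sC sA B C A P Q L N M V W hsB1 hsB3 hsB2 hQ2 hsC1 hsC2 hsC3 hQ3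
      hsA1 hsA3 hsA2 hQ1 colBLC colANB colAMC hV1 hV2 hV3 hW1 hW2 hW3
      hPB hPC hLB hLC hNB hNA hMC hMA hLN.symm (fun h => hLM h.symm) h1 h2 h3 h4
  -- noncollinearities
  have ncU : U ≠ Q → U ≠ P → ¬Collinear ℝ ({Q, U, P} : Set Pt) := fun h1 h2 =>
    ncQUP sA A P U Q hU1 hU3 hQ1 hQA h1 h2
  have ncV : V ≠ Q → V ≠ P → ¬Collinear ℝ ({Q, V, P} : Set Pt) := fun h1 h2 =>
    ncQUP sB B P V Q hV1 hV3 hQ2 hQB h1 h2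
  have ncW : W ≠ Q → W ≠ P → ¬Collinear ℝ ({Q, W, P} : Set Pt) := fun h1 h2 =>
    ncQUP sC C P W Q hW1 hW3 hQ3 hQC h1 h2
  -- it now suffices to find a single sphere containing all five points
  suffices hsph : ∃ s : Sphere Pt, U ∈ s ∧ V ∈ s ∧ W ∈ s ∧ P ∈ s ∧ Q ∈ s by
    obtain ⟨s, h1, h2, h3, h4, h5⟩ := hsph
    refine ⟨cospherical_iff_exists_sphere.2 ⟨s, ?_⟩, coplanar_of_fact_finrank_eq_two _⟩
    intro p hp
    simp only [Set.mem_insert_iff, Set.mem_singleton_iff] at hp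
    rcases hp with rfl | rfl | rfl | rfl | rfl <;> assumption
  by_cases hUg : U = P ∨ U = Q
  · by_cases hVg : V = P ∨ V = Q
    · by_cases hWg : W = P ∨ W = Q
      · -- all degenerate: everything is P or Q
        obtain ⟨s, hs⟩ := cospherical_iff_exists_sphere.1 (cospherical_pair P Q)
        have hPm : P ∈ s := hs (Set.mem_insert _ _)
        have hQm : Q ∈ s := hs (Set.mem_insert_of_mem _ rfl)
        refine ⟨s, ?_, ?_, ?_, hPm, hQm⟩
        · rcases hUg with h | h <;> rw [h] <;> assumption
        · rcases hVg with h | h <;> rw [h] <;> assumption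
        · rcases hWg with h | h <;> rw [h] <;> assumption
      · push_neg at hWg
        obtain ⟨s, hQm, hWm, hPm⟩ := exists_sphere3 (ncW hWg.2 hWg.1)
        refine ⟨s, ?_, ?_, hWm, hPm, hQm⟩
        · rcases hUg with h | h <;> rw [h] <;> assumption
        · rcases hVg with h | h <;> rw [h] <;> assumption
    · push_neg at hVg
      by_cases hWg : W = P ∨ W = Q
      · obtain ⟨s, hQm, hVm, hPm⟩ := exists_sphere3 (ncV hVg.2 hVg.1)
        refine ⟨s, ?_, hVm, ?_, hPm, hQm⟩
        · rcases hUg with h | h <;> rw [h] <;> assumption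
        · rcases hWg with h | h <;> rw [h] <;> assumption
      · push_neg at hWg
        have cos : Cospherical ({Q, V, W, P} : Set Pt) :=
          cospherical_of_two_zsmul_oangle_eq_of_not_collinear
            (linkVW hVg.1 hVg.2 hWg.1 hWg.2) (ncV hVg.2 hVg.1)
        obtain ⟨s, hs⟩ := cospherical_iff_exists_sphere.1 cos
        have hQm : Q ∈ s := hs (Set.mem_insert _ _)
        have hVm : V ∈ s := hs (Set.mem_insert_of_mem _ (Set.mem_insert _ _))
        have hWm : W ∈ s := hs (Set.mem_insert_of_mem _
          (Set.mem_insert_of_mem _ (Set.mem_insert _ _)))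
        have hPm : P ∈ s := hs (Set.mem_insert_of_mem _ (Set.mem_insert_of_mem _
          (Set.mem_insert_of_mem _ rfl)))
        refine ⟨s, ?_, hVm, hWm, hPm, hQm⟩
        rcases hUg with h | h <;> rw [h] <;> assumption
  · push_neg at hUg
    by_cases hVg : V = P ∨ V = Q
    · by_cases hWg : W = P ∨ W = Q
      · obtain ⟨s, hQm, hUm, hPm⟩ := exists_sphere3 (ncU hUg.2 hUg.1)
        refine ⟨s, hUm, ?_, ?_, hPm, hQm⟩
        · rcases hVg with h | h <;> rw [h] <;> assumption
        · rcases hWg with h | h <;> rw [h] <;> assumption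
      · push_neg at hWg
        have cos : Cospherical ({Q, U, W, P} : Set Pt) :=
          cospherical_of_two_zsmul_oangle_eq_of_not_collinear
            (linkUW hUg.1 hUg.2 hWg.1 hWg.2) (ncU hUg.2 hUg.1)
        obtain ⟨s, hs⟩ := cospherical_iff_exists_sphere.1 cos
        have hQm : Q ∈ s := hs (Set.mem_insert _ _)
        have hUm : U ∈ s := hs (Set.mem_insert_of_mem _ (Set.mem_insert _ _))
        have hWm : W ∈ s := hs (Set.mem_insert_of_mem _
          (Set.mem_insert_of_mem _ (Set.mem_insert _ _)))
        have hPm : P ∈ s := hs (Set.mem_insert_of_mem _ (Set.mem_insert_of_mem _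
          (Set.mem_insert_of_mem _ rfl)))
        refine ⟨s, hUm, ?_, hWm, hPm, hQm⟩
        rcases hVg with h | h <;> rw [h] <;> assumption
    · push_neg at hVg
      have cosUV : Cospherical ({Q, U, V, P} : Set Pt) :=
        cospherical_of_two_zsmul_oangle_eq_of_not_collinear
          (linkUV hUg.1 hUg.2 hVg.1 hVg.2) (ncU hUg.2 hUg.1)
      obtain ⟨s₁, hs₁⟩ := cospherical_iff_exists_sphere.1 cosUV
      have hQm : Q ∈ s₁ := hs₁ (Set.mem_insert _ _)
      have hUm : U ∈ s₁ := hs₁ (Set.mem_insert_of_mem _ (Set.mem_insert _ _))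
      have hVm : V ∈ s₁ := hs₁ (Set.mem_insert_of_mem _
        (Set.mem_insert_of_mem _ (Set.mem_insert _ _)))
      have hPm : P ∈ s₁ := hs₁ (Set.mem_insert_of_mem _ (Set.mem_insert_of_mem _
        (Set.mem_insert_of_mem _ rfl)))
      by_cases hWg : W = P ∨ W = Q
      · refine ⟨s₁, hUm, hVm, ?_, hPm, hQm⟩
        rcases hWg with h | h <;> rw [h] <;> assumption
      · push_neg at hWg
        have cosUW : Cospherical ({Q, U, W, P} : Set Pt) :=
          cospherical_of_two_zsmul_oangle_eq_of_not_collinear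
            (linkUW hUg.1 hUg.2 hWg.1 hWg.2) (ncU hUg.2 hUg.1)
        obtain ⟨s₂, hs₂⟩ := cospherical_iff_exists_sphere.1 cosUW
        have hQm₂ : Q ∈ s₂ := hs₂ (Set.mem_insert _ _)
        have hUm₂ : U ∈ s₂ := hs₂ (Set.mem_insert_of_mem _ (Set.mem_insert _ _))
        have hWm₂ : W ∈ s₂ := hs₂ (Set.mem_insert_of_mem _
          (Set.mem_insert_of_mem _ (Set.mem_insert _ _)))
        have hPm₂ : P ∈ s₂ := hs₂ (Set.mem_insert_of_mem _ (Set.mem_insert_of_mem _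
          (Set.mem_insert_of_mem _ rfl)))
        have heq : s₁ = s₂ :=
          sphere_eq3 (ncU hUg.2 hUg.1) hQm hUm hPm hQm₂ hUm₂ hPm₂
        exact ⟨s₁, hUm, hVm, heq ▸ hWm₂, hPm, hQm⟩
end

section
/- Let ABC be a non-degenerate triangle in the Euclidean plane and let P be a point not lying on any of the lines BC, CA, AB. Let L = AP ∩ BC, M = BP ∩ CA, N = CP ∩ AB be the feet of the Cevians through P, assumed to exist and not be vertices. Let Q be the Miquel point of L, M, N, and let U be the second intersection of line AP with circle AMN, V the second intersection of line BP with circle BNL, and W the second intersection of line CP with circle CLM. Then P lies on the circle through U, V, W. -/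
open EuclideanGeometry

local notation "Pt" => EuclideanSpace ℝ (Fin 2)

private lemma pt_ext {X Y : Pt} (h0 : X 0 = Y 0) (h1 : X 1 = Y 1) : X = Y := by
  ext i
  fin_cases i <;> assumption

private lemma dist_sq_coords (X Y : Pt) :
    dist X Y ^ 2 = (X 0 - Y 0) ^ 2 + (X 1 - Y 1) ^ 2 := by
  rw [EuclideanSpace.dist_eq, Real.sq_sqrt (by positivity)]
  simp [Fin.sum_univ_two, Real.dist_eq, sq_abs]

private lemma comb_coord (r : ℝ) (x y : Pt) (i : Fin 2) :
    (r • (x -ᵥ y) +ᵥ y : Pt) i = r * (x i - y i) + y i := by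
  simp [PiLp.smul_apply, PiLp.sub_apply, PiLp.add_apply, smul_eq_mul]

private lemma line_coords {A B X : Pt} :
    X ∈ line[ℝ, A, B] ↔
      ∃ t : ℝ, X 0 - A 0 = t * (B 0 - A 0) ∧ X 1 - A 1 = t * (B 1 - A 1) := by
  have h := vadd_left_mem_affineSpan_pair (k := ℝ) (p₁ := A) (p₂ := B) (v := X -ᵥ A)
  rw [vsub_vadd] at h
  rw [h]
  constructor
  · rintro ⟨t, ht⟩
    refine ⟨t, ?_, ?_⟩
    · have h0 := congrArg (fun z : Pt => z 0) ht
      simpa [PiLp.smul_apply, PiLp.sub_apply, smul_eq_mul] using h0.symm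
    · have h1 := congrArg (fun z : Pt => z 1) ht
      simpa [PiLp.smul_apply, PiLp.sub_apply, smul_eq_mul] using h1.symm
  · rintro ⟨t, h0, h1⟩
    refine ⟨t, ?_⟩
    apply pt_ext
    · simpa [PiLp.smul_apply, PiLp.sub_apply, smul_eq_mul] using h0.symm
    · simpa [PiLp.smul_apply, PiLp.sub_apply, smul_eq_mul] using h1.symm

private lemma vec_decomp {x0 x1 y0 y1 : ℝ} (h : x0 * y1 - x1 * y0 = 0)
    (hx : ¬(x0 = 0 ∧ x1 = 0)) : ∃ t : ℝ, y0 = t * x0 ∧ y1 = t * x1 := by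
  rcases eq_or_ne x0 0 with h0 | h0
  · have hx1 : x1 ≠ 0 := fun h1 => hx ⟨h0, h1⟩
    refine ⟨y1 / x1, ?_, by field_simp⟩
    have hy0 : y0 = 0 := by
      have : x1 * y0 = 0 := by linear_combination -h + y1 * h0
      rcases mul_eq_zero.mp this with h' | h'
      · exact absurd h' hx1
      · exact h'
    rw [hy0, h0, mul_zero]
  · refine ⟨y0 / x0, by field_simp, ?_⟩
    rw [div_mul_eq_mul_div, eq_div_iff h0]
    linear_combination h

private lemma collinear_coords {U V W : Pt} (t : ℝ)
    (h0 : W 0 - U 0 = t * (V 0 - U 0)) (h1 : W 1 - U 1 = t * (V 1 - U 1)) :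
    Collinear ℝ ({U, V, W} : Set Pt) := by
  rw [collinear_iff_exists_forall_eq_smul_vadd]
  refine ⟨U, V -ᵥ U, ?_⟩
  rintro p (rfl | rfl | rfl)
  · exact ⟨0, by apply pt_ext <;> simp [PiLp.smul_apply, PiLp.sub_apply, PiLp.add_apply]⟩
  · exact ⟨1, by apply pt_ext <;> simp [PiLp.smul_apply, PiLp.sub_apply, PiLp.add_apply]⟩
  · refine ⟨t, ?_⟩
    apply pt_ext
    · have := comb_coord t V U 0
      rw [this]; linarith [h0]
    · have := comb_coord t V U 1
      rw [this]; linarith [h1]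

private lemma dist_eq_of_sq {X Y c : Pt} (h : dist X c ^ 2 = dist Y c ^ 2) :
    dist X c = dist Y c := by
  have h1 : dist X c = Real.sqrt (dist X c ^ 2) := (Real.sqrt_sq dist_nonneg).symm
  rw [h1, h, Real.sqrt_sq dist_nonneg]


private lemma cev_rel (a0 a1 b0 b1 c0 c1 l s L0 L1 : ℝ)
    (e0 : L0 = l * a0) (e1 : L1 = l * a1)
    (f0 : L0 - b0 = s * (c0 - b0)) (f1 : L1 - b1 = s * (c1 - b1)) :
    l * ((c0 * a1 - c1 * a0) + (a0 * b1 - a1 * b0)) = -(b0 * c1 - b1 * c0) := by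
  linear_combination (c1 - b1) * e0 - (c1 - b1) * f0 - (c0 - b0) * e1 + (c0 - b0) * f1

private lemma powthree3 (x0 x1 y0 y1 z0 z1 o0 o1 : ℝ)
    (e1 : (y0 - o0) ^ 2 + (y1 - o1) ^ 2 = (x0 - o0) ^ 2 + (x1 - o1) ^ 2)
    (e2 : (z0 - o0) ^ 2 + (z1 - o1) ^ 2 = (x0 - o0) ^ 2 + (x1 - o1) ^ 2) :
    (2 * (x0 * o0 + x1 * o1) - (x0 ^ 2 + x1 ^ 2)) *
        ((y0 * z1 - y1 * z0) + (z0 * x1 - z1 * x0) + (x0 * y1 - x1 * y0)) =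
      -((y0 * z1 - y1 * z0) * (x0 ^ 2 + x1 ^ 2) + (z0 * x1 - z1 * x0) * (y0 ^ 2 + y1 ^ 2) +
        (x0 * y1 - x1 * y0) * (z0 ^ 2 + z1 ^ 2)) := by
  linear_combination (z0 * x1 - z1 * x0) * e1 + (x0 * y1 - x1 * y0) * e2

set_option maxHeartbeats 4000000 in
private lemma diamond (ka kb kc qa qb qc l m n pA pB pC : ℝ)
    (hka : ka ≠ 0) (hkb : kb ≠ 0) (hkc : kc ≠ 0) (hS : ka + kb + kc ≠ 0)
    (h1 : l * (kb + kc) = -ka) (h2 : m * (kc + ka) = -kb) (h3 : n * (ka + kb) = -kc)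
    (h4 : pA * (m*n*ka + n*kb + m*kc) = -(m*n*(ka*qa + m*kb*qb + n*kc*qc)))
    (h5 : pB * (n*l*kb + l*kc + n*ka) = -(n*l*(kb*qb + n*kc*qc + l*ka*qa)))
    (h6 : pC * (l*m*kc + m*ka + l*kb) = -(l*m*(kc*qc + l*ka*qa + m*kb*qb))) :
    ka * pA + kb * pB + kc * pC = 0 := by
  have hS1 : kb + kc ≠ 0 := by
    intro h; apply hka; have h' := h1; rw [h, mul_zero] at h'; linarith
  have hS2 : kc + ka ≠ 0 := by
    intro h; apply hkb; have h' := h2; rw [h, mul_zero] at h'; linarith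
  have hS3 : ka + kb ≠ 0 := by
    intro h; apply hkc; have h' := h3; rw [h, mul_zero] at h'; linarith
  have tA : pA * (kb*kc*(ka+kb+kc)*(kc+ka)^3*(ka+kb)^3) =
      kb*kc*(ka*qa*((kc+ka)*(ka+kb)) - kb^2*qb*(ka+kb) - kc^2*qc*(kc+ka)) *
        ((kc+ka)^2*(ka+kb)^2) := by
    linear_combination (-(kc+ka)^4*(ka+kb)^4) * h4 + ((ka^8*qa*n + ka^8*n*pA + 4*ka^7*kb*qa*n + ka^7*kb*qb*m*n + 4*ka^7*kb*n*pA + 3*ka^7*kc*qa*n + ka^7*kc*qc*n^2 + 3*ka^7*kc*n*pA + ka^7*kc*pA + 6*ka^6*kb^2*qa*n + 4*ka^6*kb^2*qb*m*n - ka^6*kb^2*qb*n + 6*ka^6*kb^2*n*pA + 12*ka^6*kb*kc*qa*n + 3*ka^6*kb*kc*qb*m*n + 4*ka^6*kb*kc*qc*n^2 + 12*ka^6*kb*kc*n*pA + 4*ka^6*kb*kc*pA + 3*ka^6*kc^2*qa*n + 3*ka^6*kc^2*qc*n^2 + 3*ka^6*kc^2*n*pA + 3*ka^6*kc^2*pA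 + 4*ka^5*kb^3*qa*n + 6*ka^5*kb^3*qb*m*n - 4*ka^5*kb^3*qb*n + 4*ka^5*kb^3*n*pA + 18*ka^5*kb^2*kc*qa*n + 12*ka^5*kb^2*kc*qb*m*n - 2*ka^5*kb^2*kc*qb*n + 6*ka^5*kb^2*kc*qc*n^2 + 18*ka^5*kb^2*kc*n*pA + 6*ka^5*kb^2*kc*pA + 12*ka^5*kb*kc^2*qa*n + 3*ka^5*kb*kc^2*qb*m*n + 12*ka^5*kb*kc^2*qc*n^2 + 12*ka^5*kb*kc^2*n*pA + 12*ka^5*kb*kc^2*pA + ka^5*kc^3*qa*n + 3*ka^5*kc^3*qc*n^2 + ka^5*kc^3*n*pA + 3*ka^5*kc^3*pA + ka^4*kb^4*qa*n + 4*ka^4*kb^4*qb*m*n - 6*ka^4*kb^4*qb*n + ka^4*kb^4*n*pA + 12*ka^4*kb^3*kc*qa*n + 18*ka^4*kb^3*kc*qb*m*n - 8*ka^4*kb^3*kc*qb*n + 4*ka^4*kb^3*kc*qc*n^2 + 12*ka^4*kb^3*kc*n*pA + 4*ka^4*kb^3*kc*pA + 18*ka^4*kb^2*kc^2*qa*n +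 12*ka^4*kb^2*kc^2*qb*m*n - ka^4*kb^2*kc^2*qb*n + 18*ka^4*kb^2*kc^2*qc*n^2 + 18*ka^4*kb^2*kc^2*n*pA + 18*ka^4*kb^2*kc^2*pA + 4*ka^4*kb*kc^3*qa*n + ka^4*kb*kc^3*qb*m*n + 12*ka^4*kb*kc^3*qc*n^2 + 4*ka^4*kb*kc^3*n*pA + 12*ka^4*kb*kc^3*pA + ka^4*kc^4*qc*n^2 + ka^4*kc^4*pA + ka^3*kb^5*qb*m*n - 4*ka^3*kb^5*qb*n + 3*ka^3*kb^4*kc*qa*n + 12*ka^3*kb^4*kc*qb*m*n - 12*ka^3*kb^4*kc*qb*n + ka^3*kb^4*kc*qc*n^2 + 3*ka^3*kb^4*kc*n*pA + ka^3*kb^4*kc*pA + 12*ka^3*kb^3*kc^2*qa*n + 18*ka^3*kb^3*kc^2*qb*m*n - 4*ka^3*kb^3*kc^2*qb*n + 12*ka^3*kb^3*kc^2*qc*n^2 + 12*ka^3*kb^3*kc^2*n*pA + 12*ka^3*kb^3*kc^2*pA + 6*ka^3*kb^2*kc^3*qa*n + 4*ka^3*kb^2*kc^3*qb*m*n + 18*ka^3*kb^2*kc^3*qc*n^2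 + 6*ka^3*kb^2*kc^3*n*pA + 18*ka^3*kb^2*kc^3*pA + 4*ka^3*kb*kc^4*qc*n^2 + 4*ka^3*kb*kc^4*pA - ka^2*kb^6*qb*n + 3*ka^2*kb^5*kc*qb*m*n - 8*ka^2*kb^5*kc*qb*n + 3*ka^2*kb^4*kc^2*qa*n + 12*ka^2*kb^4*kc^2*qb*m*n - 6*ka^2*kb^4*kc^2*qb*n + 3*ka^2*kb^4*kc^2*qc*n^2 + 3*ka^2*kb^4*kc^2*n*pA + 3*ka^2*kb^4*kc^2*pA + 4*ka^2*kb^3*kc^3*qa*n + 6*ka^2*kb^3*kc^3*qb*m*n + 12*ka^2*kb^3*kc^3*qc*n^2 + 4*ka^2*kb^3*kc^3*n*pA + 12*ka^2*kb^3*kc^3*pA + 6*ka^2*kb^2*kc^4*qc*n^2 + 6*ka^2*kb^2*kc^4*pA - 2*ka*kb^6*kc*qb*n + 3*ka*kb^5*kc^2*qb*m*n - 4*ka*kb^5*kc^2*qb*n + ka*kb^4*kc^3*qa*n + 4*ka*kb^4*kc^3*qb*m*n + 3*ka*kb^4*kc^3*qc*n^2 + ka*kb^4*kc^3*n*pA +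 3*ka*kb^4*kc^3*pA + 4*ka*kb^3*kc^4*qc*n^2 + 4*ka*kb^3*kc^4*pA - kb^6*kc^2*qb*n + kb^5*kc^3*qb*m*n + kb^4*kc^4*qc*n^2 + kb^4*kc^4*pA)) * h2 + ((- ka^7*kb*qa - 3*ka^6*kb^2*qa - 3*ka^6*kb*kc*qa - ka^6*kb*kc*qc*n + ka^6*kb*kc*pA - 3*ka^5*kb^3*qa + ka^5*kb^3*qb - 9*ka^5*kb^2*kc*qa - 3*ka^5*kb^2*kc*qc*n + 3*ka^5*kb^2*kc*pA - 3*ka^5*kb*kc^2*qa - 3*ka^5*kb*kc^2*qc*n + ka^5*kb*kc^2*qc + 3*ka^5*kb*kc^2*pA - ka^4*kb^4*qa + 3*ka^4*kb^4*qb - 9*ka^4*kb^3*kc*qa + 2*ka^4*kb^3*kc*qb - 3*ka^4*kb^3*kc*qc*n + 3*ka^4*kb^3*kc*pA - 9*ka^4*kb^2*kc^2*qa - 9*ka^4*kb^2*kc^2*qc*n + 2*ka^4*kb^2*kc^2*qc + 9*ka^4*kb^2*kc^2*pA - ka^4*kb*kc^3*qa - 3*ka^4*kb*kc^3*qc*n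 + 3*ka^4*kb*kc^3*qc + 3*ka^4*kb*kc^3*pA + 3*ka^3*kb^5*qb - 3*ka^3*kb^4*kc*qa + 6*ka^3*kb^4*kc*qb - ka^3*kb^4*kc*qc*n + ka^3*kb^4*kc*pA - 9*ka^3*kb^3*kc^2*qa + ka^3*kb^3*kc^2*qb - 9*ka^3*kb^3*kc^2*qc*n + ka^3*kb^3*kc^2*qc + 9*ka^3*kb^3*kc^2*pA - 3*ka^3*kb^2*kc^3*qa - 9*ka^3*kb^2*kc^3*qc*n + 6*ka^3*kb^2*kc^3*qc + 9*ka^3*kb^2*kc^3*pA - ka^3*kb*kc^4*qc*n + 3*ka^3*kb*kc^4*qc + ka^3*kb*kc^4*pA + ka^2*kb^6*qb + 6*ka^2*kb^5*kc*qb - 3*ka^2*kb^4*kc^2*qa + 3*ka^2*kb^4*kc^2*qb - 3*ka^2*kb^4*kc^2*qc*n + 3*ka^2*kb^4*kc^2*pA - 3*ka^2*kb^3*kc^3*qa - 9*ka^2*kb^3*kc^3*qc*n + 3*ka^2*kb^3*kc^3*qc + 9*ka^2*kb^3*kc^3*pA - 3*ka^2*kb^2*kc^4*qc*n + 6*ka^2*kb^2*kc^4*qc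 + 3*ka^2*kb^2*kc^4*pA + ka^2*kb*kc^5*qc + 2*ka*kb^6*kc*qb + 3*ka*kb^5*kc^2*qb - ka*kb^4*kc^3*qa - 3*ka*kb^4*kc^3*qc*n + 3*ka*kb^4*kc^3*pA - 3*ka*kb^3*kc^4*qc*n + 3*ka*kb^3*kc^4*qc + 3*ka*kb^3*kc^4*pA + 2*ka*kb^2*kc^5*qc + kb^6*kc^2*qb - kb^4*kc^4*qc*n + kb^4*kc^4*pA + kb^3*kc^5*qc)) * h3
  have tB : pB * (kc*ka*(ka+kb+kc)*(ka+kb)^3*(kb+kc)^3) =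
      kc*ka*(kb*qb*((ka+kb)*(kb+kc)) - kc^2*qc*(kb+kc) - ka^2*qa*(ka+kb)) *
        ((ka+kb)^2*(kb+kc)^2) := by
    linear_combination (-(ka+kb)^4*(kb+kc)^4) * h5 + ((ka^4*kb^4*qa*l^2 + ka^4*kb^4*pB + 4*ka^4*kb^3*kc*qa*l^2 + 4*ka^4*kb^3*kc*pB + 6*ka^4*kb^2*kc^2*qa*l^2 + 6*ka^4*kb^2*kc^2*pB + 4*ka^4*kb*kc^3*qa*l^2 + 4*ka^4*kb*kc^3*pB + ka^4*kc^4*qa*l^2 + ka^4*kc^4*pB + 3*ka^3*kb^5*qa*l^2 + ka^3*kb^5*qb*l + ka^3*kb^5*l*pB + 3*ka^3*kb^5*pB + 12*ka^3*kb^4*kc*qa*l^2 + 4*ka^3*kb^4*kc*qb*l + ka^3*kb^4*kc*qc*l*n + 4*ka^3*kb^4*kc*l*pB + 12*ka^3*kb^4*kc*pB + 18*ka^3*kb^3*kc^2*qa*l^2 + 6*ka^3*kb^3*kc^2*qb*l + 4*ka^3*kb^3*kc^2*qc*l*n + 6*ka^3*kb^3*kc^2*l*pB + 18*ka^3*kb^3*kc^2*pB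 + 12*ka^3*kb^2*kc^3*qa*l^2 + 4*ka^3*kb^2*kc^3*qb*l + 6*ka^3*kb^2*kc^3*qc*l*n + 4*ka^3*kb^2*kc^3*l*pB + 12*ka^3*kb^2*kc^3*pB + 3*ka^3*kb*kc^4*qa*l^2 + ka^3*kb*kc^4*qb*l + 4*ka^3*kb*kc^4*qc*l*n + ka^3*kb*kc^4*l*pB + 3*ka^3*kb*kc^4*pB + ka^3*kc^5*qc*l*n + 3*ka^2*kb^6*qa*l^2 + 3*ka^2*kb^6*qb*l + 3*ka^2*kb^6*l*pB + 3*ka^2*kb^6*pB + 12*ka^2*kb^5*kc*qa*l^2 + 12*ka^2*kb^5*kc*qb*l + 3*ka^2*kb^5*kc*qc*l*n + 12*ka^2*kb^5*kc*l*pB + 12*ka^2*kb^5*kc*pB + 18*ka^2*kb^4*kc^2*qa*l^2 + 18*ka^2*kb^4*kc^2*qb*l + 12*ka^2*kb^4*kc^2*qc*l*n - ka^2*kb^4*kc^2*qc*l + 18*ka^2*kb^4*kc^2*l*pB + 18*ka^2*kb^4*kc^2*pB + 12*ka^2*kb^3*kc^3*qa*l^2 + 12*ka^2*kb^3*kc^3*qb*l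 + 18*ka^2*kb^3*kc^3*qc*l*n - 4*ka^2*kb^3*kc^3*qc*l + 12*ka^2*kb^3*kc^3*l*pB + 12*ka^2*kb^3*kc^3*pB + 3*ka^2*kb^2*kc^4*qa*l^2 + 3*ka^2*kb^2*kc^4*qb*l + 12*ka^2*kb^2*kc^4*qc*l*n - 6*ka^2*kb^2*kc^4*qc*l + 3*ka^2*kb^2*kc^4*l*pB + 3*ka^2*kb^2*kc^4*pB + 3*ka^2*kb*kc^5*qc*l*n - 4*ka^2*kb*kc^5*qc*l - ka^2*kc^6*qc*l + ka*kb^7*qa*l^2 + 3*ka*kb^7*qb*l + 3*ka*kb^7*l*pB + ka*kb^7*pB + 4*ka*kb^6*kc*qa*l^2 + 12*ka*kb^6*kc*qb*l + 3*ka*kb^6*kc*qc*l*n + 12*ka*kb^6*kc*l*pB + 4*ka*kb^6*kc*pB + 6*ka*kb^5*kc^2*qa*l^2 + 18*ka*kb^5*kc^2*qb*l + 12*ka*kb^5*kc^2*qc*l*n - 2*ka*kb^5*kc^2*qc*l + 18*ka*kb^5*kc^2*l*pB + 6*ka*kb^5*kc^2*pB + 4*ka*kb^4*kc^3*qa*l^2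 + 12*ka*kb^4*kc^3*qb*l + 18*ka*kb^4*kc^3*qc*l*n - 8*ka*kb^4*kc^3*qc*l + 12*ka*kb^4*kc^3*l*pB + 4*ka*kb^4*kc^3*pB + ka*kb^3*kc^4*qa*l^2 + 3*ka*kb^3*kc^4*qb*l + 12*ka*kb^3*kc^4*qc*l*n - 12*ka*kb^3*kc^4*qc*l + 3*ka*kb^3*kc^4*l*pB + ka*kb^3*kc^4*pB + 3*ka*kb^2*kc^5*qc*l*n - 8*ka*kb^2*kc^5*qc*l - 2*ka*kb*kc^6*qc*l + kb^8*qb*l + kb^8*l*pB + 4*kb^7*kc*qb*l + kb^7*kc*qc*l*n + 4*kb^7*kc*l*pB + 6*kb^6*kc^2*qb*l + 4*kb^6*kc^2*qc*l*n - kb^6*kc^2*qc*l + 6*kb^6*kc^2*l*pB + 4*kb^5*kc^3*qb*l + 6*kb^5*kc^3*qc*l*n - 4*kb^5*kc^3*qc*l + 4*kb^5*kc^3*l*pB + kb^4*kc^4*qb*l + 4*kb^4*kc^4*qc*l*n - 6*kb^4*kc^4*qc*l + kb^4*kc^4*l*pB + kb^3*kc^5*qc*l*n - 4*kb^3*kc^5*qc*l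 - kb^2*kc^6*qc*l)) * h3 + ((ka^5*kb^2*kc*qa + 2*ka^5*kb*kc^2*qa + ka^5*kc^3*qa - ka^4*kb^3*kc*qa*l + 3*ka^4*kb^3*kc*qa + ka^4*kb^3*kc*pB - 3*ka^4*kb^2*kc^2*qa*l + 6*ka^4*kb^2*kc^2*qa + 3*ka^4*kb^2*kc^2*pB - 3*ka^4*kb*kc^3*qa*l + 3*ka^4*kb*kc^3*qa + 3*ka^4*kb*kc^3*pB - ka^4*kc^4*qa*l + ka^4*kc^4*pB - 3*ka^3*kb^4*kc*qa*l + 3*ka^3*kb^4*kc*qa - ka^3*kb^4*kc*qb + 3*ka^3*kb^4*kc*pB - 9*ka^3*kb^3*kc^2*qa*l + 6*ka^3*kb^3*kc^2*qa - 3*ka^3*kb^3*kc^2*qb + 9*ka^3*kb^3*kc^2*pB - 9*ka^3*kb^2*kc^3*qa*l + 3*ka^3*kb^2*kc^3*qa - 3*ka^3*kb^2*kc^3*qb + 9*ka^3*kb^2*kc^3*pB - 3*ka^3*kb*kc^4*qa*l - ka^3*kb*kc^4*qb + 3*ka^3*kb*kc^4*pB - 3*ka^2*kb^5*kc*qa*l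 + ka^2*kb^5*kc*qa - 3*ka^2*kb^5*kc*qb + 3*ka^2*kb^5*kc*pB - 9*ka^2*kb^4*kc^2*qa*l + 2*ka^2*kb^4*kc^2*qa - 9*ka^2*kb^4*kc^2*qb + 9*ka^2*kb^4*kc^2*pB - 9*ka^2*kb^3*kc^3*qa*l + ka^2*kb^3*kc^3*qa - 9*ka^2*kb^3*kc^3*qb + ka^2*kb^3*kc^3*qc + 9*ka^2*kb^3*kc^3*pB - 3*ka^2*kb^2*kc^4*qa*l - 3*ka^2*kb^2*kc^4*qb + 3*ka^2*kb^2*kc^4*qc + 3*ka^2*kb^2*kc^4*pB + 3*ka^2*kb*kc^5*qc + ka^2*kc^6*qc - ka*kb^6*kc*qa*l - 3*ka*kb^6*kc*qb + ka*kb^6*kc*pB - 3*ka*kb^5*kc^2*qa*l - 9*ka*kb^5*kc^2*qb + 3*ka*kb^5*kc^2*pB - 3*ka*kb^4*kc^3*qa*l - 9*ka*kb^4*kc^3*qb + 2*ka*kb^4*kc^3*qc + 3*ka*kb^4*kc^3*pB - ka*kb^3*kc^4*qa*l - 3*ka*kb^3*kc^4*qb + 6*ka*kb^3*kc^4*qc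 + ka*kb^3*kc^4*pB + 6*ka*kb^2*kc^5*qc + 2*ka*kb*kc^6*qc - kb^7*kc*qb - 3*kb^6*kc^2*qb - 3*kb^5*kc^3*qb + kb^5*kc^3*qc - kb^4*kc^4*qb + 3*kb^4*kc^4*qc + 3*kb^3*kc^5*qc + kb^2*kc^6*qc)) * h1
  have tC : pC * (ka*kb*(ka+kb+kc)*(kb+kc)^3*(kc+ka)^3) =
      ka*kb*(kc*qc*((kb+kc)*(kc+ka)) - ka^2*qa*(kc+ka) - kb^2*qb*(kb+kc)) *
        ((kb+kc)^2*(kc+ka)^2) := by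
    linear_combination (-(kb+kc)^4*(kc+ka)^4) * h6 + ((- ka^6*kb^2*qa*m - 2*ka^6*kb*kc*qa*m - ka^6*kc^2*qa*m + ka^5*kb^3*qa*l*m + 3*ka^5*kb^2*kc*qa*l*m - 4*ka^5*kb^2*kc*qa*m + 3*ka^5*kb*kc^2*qa*l*m - 8*ka^5*kb*kc^2*qa*m + ka^5*kc^3*qa*l*m - 4*ka^5*kc^3*qa*m + ka^4*kb^4*qb*m^2 + ka^4*kb^4*pC + 4*ka^4*kb^3*kc*qa*l*m + 3*ka^4*kb^3*kc*qb*m^2 + ka^4*kb^3*kc*qc*m + ka^4*kb^3*kc*m*pC + 3*ka^4*kb^3*kc*pC + 12*ka^4*kb^2*kc^2*qa*l*m - 6*ka^4*kb^2*kc^2*qa*m + 3*ka^4*kb^2*kc^2*qb*m^2 + 3*ka^4*kb^2*kc^2*qc*m + 3*ka^4*kb^2*kc^2*m*pC + 3*ka^4*kb^2*kc^2*pC + 12*ka^4*kb*kc^3*qa*l*m - 12*ka^4*kb*kc^3*qa*m + ka^4*kb*kc^3*qb*m^2 + 3*ka^4*kb*kc^3*qc*m + 3*ka^4*kb*kc^3*m*pC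 + ka^4*kb*kc^3*pC + 4*ka^4*kc^4*qa*l*m - 6*ka^4*kc^4*qa*m + ka^4*kc^4*qc*m + ka^4*kc^4*m*pC + 4*ka^3*kb^4*kc*qb*m^2 + 4*ka^3*kb^4*kc*pC + 6*ka^3*kb^3*kc^2*qa*l*m + 12*ka^3*kb^3*kc^2*qb*m^2 + 4*ka^3*kb^3*kc^2*qc*m + 4*ka^3*kb^3*kc^2*m*pC + 12*ka^3*kb^3*kc^2*pC + 18*ka^3*kb^2*kc^3*qa*l*m - 4*ka^3*kb^2*kc^3*qa*m + 12*ka^3*kb^2*kc^3*qb*m^2 + 12*ka^3*kb^2*kc^3*qc*m + 12*ka^3*kb^2*kc^3*m*pC + 12*ka^3*kb^2*kc^3*pC + 18*ka^3*kb*kc^4*qa*l*m - 8*ka^3*kb*kc^4*qa*m + 4*ka^3*kb*kc^4*qb*m^2 + 12*ka^3*kb*kc^4*qc*m + 12*ka^3*kb*kc^4*m*pC + 4*ka^3*kb*kc^4*pC + 6*ka^3*kc^5*qa*l*m - 4*ka^3*kc^5*qa*m + 4*ka^3*kc^5*qc*m + 4*ka^3*kc^5*m*pC + 6*ka^2*kb^4*kc^2*qb*m^2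 + 6*ka^2*kb^4*kc^2*pC + 4*ka^2*kb^3*kc^3*qa*l*m + 18*ka^2*kb^3*kc^3*qb*m^2 + 6*ka^2*kb^3*kc^3*qc*m + 6*ka^2*kb^3*kc^3*m*pC + 18*ka^2*kb^3*kc^3*pC + 12*ka^2*kb^2*kc^4*qa*l*m - ka^2*kb^2*kc^4*qa*m + 18*ka^2*kb^2*kc^4*qb*m^2 + 18*ka^2*kb^2*kc^4*qc*m + 18*ka^2*kb^2*kc^4*m*pC + 18*ka^2*kb^2*kc^4*pC + 12*ka^2*kb*kc^5*qa*l*m - 2*ka^2*kb*kc^5*qa*m + 6*ka^2*kb*kc^5*qb*m^2 + 18*ka^2*kb*kc^5*qc*m + 18*ka^2*kb*kc^5*m*pC + 6*ka^2*kb*kc^5*pC + 4*ka^2*kc^6*qa*l*m - ka^2*kc^6*qa*m + 6*ka^2*kc^6*qc*m + 6*ka^2*kc^6*m*pC + 4*ka*kb^4*kc^3*qb*m^2 + 4*ka*kb^4*kc^3*pC + ka*kb^3*kc^4*qa*l*m + 12*ka*kb^3*kc^4*qb*m^2 + 4*ka*kb^3*kc^4*qc*m + 4*ka*kb^3*kc^4*m*pC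 + 12*ka*kb^3*kc^4*pC + 3*ka*kb^2*kc^5*qa*l*m + 12*ka*kb^2*kc^5*qb*m^2 + 12*ka*kb^2*kc^5*qc*m + 12*ka*kb^2*kc^5*m*pC + 12*ka*kb^2*kc^5*pC + 3*ka*kb*kc^6*qa*l*m + 4*ka*kb*kc^6*qb*m^2 + 12*ka*kb*kc^6*qc*m + 12*ka*kb*kc^6*m*pC + 4*ka*kb*kc^6*pC + ka*kc^7*qa*l*m + 4*ka*kc^7*qc*m + 4*ka*kc^7*m*pC + kb^4*kc^4*qb*m^2 + kb^4*kc^4*pC + 3*kb^3*kc^5*qb*m^2 + kb^3*kc^5*qc*m + kb^3*kc^5*m*pC + 3*kb^3*kc^5*pC + 3*kb^2*kc^6*qb*m^2 + 3*kb^2*kc^6*qc*m + 3*kb^2*kc^6*m*pC + 3*kb^2*kc^6*pC + kb*kc^7*qb*m^2 + 3*kb*kc^7*qc*m + 3*kb*kc^7*m*pC + kb*kc^7*pC + kc^8*qc*m + kc^8*m*pC)) * h1 + ((ka^6*kb^2*qa + 2*ka^6*kb*kc*qa + ka^6*kc^2*qa + 3*ka^5*kb^2*kc*qa + 6*ka^5*kb*kc^2*qa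 + 3*ka^5*kc^3*qa - ka^4*kb^4*qb*m + ka^4*kb^4*pC - 3*ka^4*kb^3*kc*qb*m - ka^4*kb^3*kc*qc + 3*ka^4*kb^3*kc*pC + 3*ka^4*kb^2*kc^2*qa - 3*ka^4*kb^2*kc^2*qb*m - 3*ka^4*kb^2*kc^2*qc + 3*ka^4*kb^2*kc^2*pC + 6*ka^4*kb*kc^3*qa - ka^4*kb*kc^3*qb*m - 3*ka^4*kb*kc^3*qc + ka^4*kb*kc^3*pC + 3*ka^4*kc^4*qa - ka^4*kc^4*qc + ka^3*kb^5*qb - 3*ka^3*kb^4*kc*qb*m + 3*ka^3*kb^4*kc*qb + 3*ka^3*kb^4*kc*pC - 9*ka^3*kb^3*kc^2*qb*m + 3*ka^3*kb^3*kc^2*qb - 3*ka^3*kb^3*kc^2*qc + 9*ka^3*kb^3*kc^2*pC + ka^3*kb^2*kc^3*qa - 9*ka^3*kb^2*kc^3*qb*m + ka^3*kb^2*kc^3*qb - 9*ka^3*kb^2*kc^3*qc + 9*ka^3*kb^2*kc^3*pC + 2*ka^3*kb*kc^4*qa - 3*ka^3*kb*kc^4*qb*m - 9*ka^3*kb*kc^4*qc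 + 3*ka^3*kb*kc^4*pC + ka^3*kc^5*qa - 3*ka^3*kc^5*qc + 2*ka^2*kb^5*kc*qb - 3*ka^2*kb^4*kc^2*qb*m + 6*ka^2*kb^4*kc^2*qb + 3*ka^2*kb^4*kc^2*pC - 9*ka^2*kb^3*kc^3*qb*m + 6*ka^2*kb^3*kc^3*qb - 3*ka^2*kb^3*kc^3*qc + 9*ka^2*kb^3*kc^3*pC - 9*ka^2*kb^2*kc^4*qb*m + 2*ka^2*kb^2*kc^4*qb - 9*ka^2*kb^2*kc^4*qc + 9*ka^2*kb^2*kc^4*pC - 3*ka^2*kb*kc^5*qb*m - 9*ka^2*kb*kc^5*qc + 3*ka^2*kb*kc^5*pC - 3*ka^2*kc^6*qc + ka*kb^5*kc^2*qb - ka*kb^4*kc^3*qb*m + 3*ka*kb^4*kc^3*qb + ka*kb^4*kc^3*pC - 3*ka*kb^3*kc^4*qb*m + 3*ka*kb^3*kc^4*qb - ka*kb^3*kc^4*qc + 3*ka*kb^3*kc^4*pC - 3*ka*kb^2*kc^5*qb*m + ka*kb^2*kc^5*qb - 3*ka*kb^2*kc^5*qc + 3*ka*kb^2*kc^5*pC -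 ka*kb*kc^6*qb*m - 3*ka*kb*kc^6*qc + ka*kb*kc^6*pC - ka*kc^7*qc)) * h2
  have key : (ka * pA + kb * pB + kc * pC) *
      (ka*kb*kc*(ka+kb+kc)*((kb+kc)*(kc+ka)*(ka+kb))^3) = 0 := by
    linear_combination (ka^2*(kb+kc)^3) * tA + (kb^2*(kc+ka)^3) * tB + (kc^2*(ka+kb)^3) * tC
  rcases mul_eq_zero.mp key with h | h
  · exact h
  · exact absurd h (by
      exact mul_ne_zero (mul_ne_zero (mul_ne_zero (mul_ne_zero hka hkb) hkc) hS)
        (pow_ne_zero 3 (mul_ne_zero (mul_ne_zero hS1 hS2) hS3)))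

private lemma assembly (a0 a1 b0 b1 c0 c1 sa sb sc o0 o1 rho : ℝ)
    (hu : (sa*a0 - o0)^2 + (sa*a1 - o1)^2 = rho)
    (hv : (sb*b0 - o0)^2 + (sb*b1 - o1)^2 = rho)
    (hw : (sc*c0 - o0)^2 + (sc*c1 - o1)^2 = rho)
    (hdiam : (b0*c1 - b1*c0) * (sa*(a0^2+a1^2)) + (c0*a1 - c1*a0) * (sb*(b0^2+b1^2))
        + (a0*b1 - a1*b0) * (sc*(c0^2+c1^2)) = 0)
    (hdet : (sb*b0 - sa*a0) * (sc*c1 - sa*a1) - (sb*b1 - sa*a1) * (sc*c0 - sa*a0) ≠ 0) :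
    o0^2 + o1^2 = rho := by
  have key : ((sb*b0 - sa*a0) * (sc*c1 - sa*a1) - (sb*b1 - sa*a1) * (sc*c0 - sa*a0)) *
      (o0^2 + o1^2) =
      ((sb*b0 - sa*a0) * (sc*c1 - sa*a1) - (sb*b1 - sa*a1) * (sc*c0 - sa*a0)) * rho := by
    linear_combination ((b0*c1 - b1*c0)*sb*sc) * hu + ((c0*a1 - c1*a0)*sc*sa) * hv
      + ((a0*b1 - a1*b0)*sa*sb) * hw - (sa*sb*sc) * hdiam
  exact mul_left_cancel₀ hdet key
private lemma second_inter_sigma (A P U : Pt) (sph : EuclideanGeometry.Sphere Pt)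
    (hA : A ∈ sph) (hU : U ∈ sph) (hU1 : U ∈ line[ℝ, A, P])
    (hU3 : ∀ X : Pt, X ∈ line[ℝ, A, P] → X ∈ sph → X = A ∨ X = U)
    (hqa : (A 0 - P 0) ^ 2 + (A 1 - P 1) ^ 2 ≠ 0) :
    ∃ σ : ℝ, U 0 - P 0 = σ * (A 0 - P 0) ∧ U 1 - P 1 = σ * (A 1 - P 1) ∧
      σ * ((A 0 - P 0) ^ 2 + (A 1 - P 1) ^ 2) =
        2 * ((A 0 - P 0) * (sph.center 0 - P 0) + (A 1 - P 1) * (sph.center 1 - P 1)) -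
          ((A 0 - P 0) ^ 2 + (A 1 - P 1) ^ 2) := by
  have rA : dist A sph.center = sph.radius := EuclideanGeometry.mem_sphere.mp hA
  obtain ⟨tU, hU0c, hU1c⟩ := line_coords.mp hU1
  have eu0 : U 0 - P 0 = (1 - tU) * (A 0 - P 0) := by linear_combination hU0c
  have eu1 : U 1 - P 1 = (1 - tU) * (A 1 - P 1) := by linear_combination hU1c
  refine ⟨1 - tU, eu0, eu1, ?_⟩
  have eU : ((1 - tU) * (A 0 - P 0) - (sph.center 0 - P 0)) ^ 2 +
        ((1 - tU) * (A 1 - P 1) - (sph.center 1 - P 1)) ^ 2 =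
      ((A 0 - P 0) - (sph.center 0 - P 0)) ^ 2 +
        ((A 1 - P 1) - (sph.center 1 - P 1)) ^ 2 := by
    have h1 : dist U sph.center ^ 2 = dist A sph.center ^ 2 := by
      rw [EuclideanGeometry.mem_sphere.mp hU, rA]
    rw [dist_sq_coords, dist_sq_coords] at h1
    linear_combination h1 - (U 0 - P 0 + (1 - tU) * (A 0 - P 0)
        - 2 * (sph.center 0 - P 0)) * eu0
      - (U 1 - P 1 + (1 - tU) * (A 1 - P 1) - 2 * (sph.center 1 - P 1)) * eu1
  have hfact : ((1 - tU) - 1) *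
      ((1 - tU) * ((A 0 - P 0) ^ 2 + (A 1 - P 1) ^ 2) -
        (2 * ((A 0 - P 0) * (sph.center 0 - P 0) + (A 1 - P 1) * (sph.center 1 - P 1)) -
          ((A 0 - P 0) ^ 2 + (A 1 - P 1) ^ 2))) = 0 := by
    linear_combination eU
  rcases mul_eq_zero.mp hfact with h | h
  · -- tangency case : 1 - tU = 1, i.e. U = A
    have hU_eq_A0 : U 0 = A 0 := by
      have : U 0 - P 0 = (1 : ℝ) * (A 0 - P 0) := by rw [eu0]; rw [show (1:ℝ) - tU = 1 by linarith]
      linarith [this]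
    have hU_eq_A1 : U 1 = A 1 := by
      have : U 1 - P 1 = (1 : ℝ) * (A 1 - P 1) := by rw [eu1]; rw [show (1:ℝ) - tU = 1 by linarith]
      linarith [this]
    -- the candidate second intersection point
    set q : ℝ := (A 0 - P 0) ^ 2 + (A 1 - P 1) ^ 2 with hqdef
    set p : ℝ := 2 * ((A 0 - P 0) * (sph.center 0 - P 0) + (A 1 - P 1) * (sph.center 1 - P 1)) - q
      with hpdef
    set τ : ℝ := 1 - p / q with hτdef
    have hXline : (τ • (P -ᵥ A) +ᵥ A : Pt) ∈ line[ℝ, A, P] :=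
      smul_vsub_vadd_mem_affineSpan_pair τ A P
    have hX0 : (τ • (P -ᵥ A) +ᵥ A : Pt) 0 = τ * (P 0 - A 0) + A 0 := comb_coord τ P A 0
    have hX1 : (τ • (P -ᵥ A) +ᵥ A : Pt) 1 = τ * (P 1 - A 1) + A 1 := comb_coord τ P A 1
    have hXsph : (τ • (P -ᵥ A) +ᵥ A : Pt) ∈ sph := by
      rw [EuclideanGeometry.mem_sphere, ← rA]
      apply dist_eq_of_sq
      rw [dist_sq_coords, dist_sq_coords, hX0, hX1, hτdef, hpdef, hqdef]
      field_simp [show (A 0 - P 0) ^ 2 + (A 1 - P 1) ^ 2 ≠ 0 from hqa]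
      ring
    have hXA : τ * (P 0 - A 0) = 0 ∧ τ * (P 1 - A 1) = 0 := by
      rcases hU3 _ hXline hXsph with hXA | hXU
      · constructor
        · have h' : (τ • (P -ᵥ A) +ᵥ A : Pt) 0 = A 0 := congrArg (fun z : Pt => z 0) hXA
          rw [hX0] at h'; linarith [h']
        · have h' : (τ • (P -ᵥ A) +ᵥ A : Pt) 1 = A 1 := congrArg (fun z : Pt => z 1) hXA
          rw [hX1] at h'; linarith [h']
      · constructor
        · have h' : (τ • (P -ᵥ A) +ᵥ A : Pt) 0 = U 0 := congrArg (fun z : Pt => z 0) hXU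
          rw [hX0, hU_eq_A0] at h'; linarith [h']
        · have h' : (τ • (P -ᵥ A) +ᵥ A : Pt) 1 = U 1 := congrArg (fun z : Pt => z 1) hXU
          rw [hX1, hU_eq_A1] at h'; linarith [h']
    have hτ0 : τ = 0 := by
      by_contra hτ
      have h0 : P 0 - A 0 = 0 := (mul_eq_zero.mp hXA.1).resolve_left hτ
      have h1 : P 1 - A 1 = 0 := (mul_eq_zero.mp hXA.2).resolve_left hτ
      apply hqa
      rw [hqdef, show A 0 - P 0 = 0 by linarith, show A 1 - P 1 = 0 by linarith]
      ring
    have hpq : p = q := by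
      have h2 : 1 - p / q = 0 := by rw [← hτdef]; exact hτ0
      have h3 : p / q = 1 := by linarith
      rwa [div_eq_one_iff_eq hqa] at h3
    rw [show (1 : ℝ) - tU = 1 by linarith, hpq]
    ring
  · linear_combination h


set_option maxHeartbeats 4000000 in
/-- Let `L`, `M`, `N` be the feet of the Cevians through `P` in a non-degenerate
triangle `ABC`, let `Q` be the Miquel point (common point of circles `AMN`, `BNL`,
`CLM`), and let `U`, `V`, `W` be the second intersections of the Cevian lines `AP`,
`BP`, `CP` with the circles `AMN`, `BNL`, `CLM` respectively.  Then `P` lies on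
the circle `UVW`. -/
theorem P_mem_circle_UVW (A B C P L M N Q U V W : Pt)
    (hABC : AffineIndependent ℝ ![A, B, C])
    (hPa : P ∉ line[ℝ, B, C]) (hPb : P ∉ line[ℝ, C, A]) (hPc : P ∉ line[ℝ, A, B])
    -- Cevian feet
    (hL1 : L ∈ line[ℝ, A, P]) (hL2 : L ∈ line[ℝ, B, C]) (hLB : L ≠ B) (hLC : L ≠ C)
    (hM1 : M ∈ line[ℝ, B, P]) (hM2 : M ∈ line[ℝ, C, A]) (hMC : M ≠ C) (hMA : M ≠ A)
    (hN1 : N ∈ line[ℝ, C, P]) (hN2 : N ∈ line[ℝ, A, B]) (hNA : N ≠ A) (hNB : N ≠ B)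
    -- the three Miquel circles
    (sA sB sC : Sphere Pt)
    (hsA1 : A ∈ sA) (hsA2 : M ∈ sA) (hsA3 : N ∈ sA)
    (hsB1 : B ∈ sB) (hsB2 : N ∈ sB) (hsB3 : L ∈ sB)
    (hsC1 : C ∈ sC) (hsC2 : L ∈ sC) (hsC3 : M ∈ sC)
    -- the Miquel point
    (hQ1 : Q ∈ sA) (hQ2 : Q ∈ sB) (hQ3 : Q ∈ sC)
    -- second intersections of the Cevian lines with the circles
    (hU1 : U ∈ line[ℝ, A, P]) (hU2 : U ∈ sA)
    (hU3 : ∀ X : Pt, X ∈ line[ℝ, A, P] → X ∈ sA → X = A ∨ X = U)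
    (hV1 : V ∈ line[ℝ, B, P]) (hV2 : V ∈ sB)
    (hV3 : ∀ X : Pt, X ∈ line[ℝ, B, P] → X ∈ sB → X = B ∨ X = V)
    (hW1 : W ∈ line[ℝ, C, P]) (hW2 : W ∈ sC)
    (hW3 : ∀ X : Pt, X ∈ line[ℝ, C, P] → X ∈ sC → X = C ∨ X = W)
    -- the circle UVW
    (hUVW : ¬ Collinear ℝ ({U, V, W} : Set Pt))
    (s : Sphere Pt) (hsU : U ∈ s) (hsV : V ∈ s) (hsW : W ∈ s) :
    P ∈ s := by
  have hncol : ¬ Collinear ℝ ({A, B, C} : Set Pt) :=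
    affineIndependent_iff_not_collinear_set.mp hABC
  have hAB : A ≠ B := by
    rintro rfl
    exact hncol (Collinear.subset (by intro x hx; simp at hx ⊢; tauto) (collinear_pair ℝ A C))
  have hBC : B ≠ C := by
    rintro rfl
    exact hncol (Collinear.subset (by intro x hx; simp at hx ⊢; tauto) (collinear_pair ℝ A B))
  have hCA : C ≠ A := by
    rintro rfl
    exact hncol (Collinear.subset (by intro x hx; simp at hx ⊢; tauto) (collinear_pair ℝ C B))
  -- the three barycentric coordinates of P are nonzero
  have hka : ((B 0 - P 0) * (C 1 - P 1) - (B 1 - P 1) * (C 0 - P 0)) ≠ 0 := by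
    intro h
    apply hPa
    have hx : ¬(C 0 - B 0 = 0 ∧ C 1 - B 1 = 0) := by
      rintro ⟨h0, h1⟩; exact hBC (pt_ext (by linarith) (by linarith))
    obtain ⟨t, ht0, ht1⟩ := vec_decomp (x0 := C 0 - B 0) (x1 := C 1 - B 1)
      (y0 := P 0 - B 0) (y1 := P 1 - B 1) (by linear_combination h) hx
    exact line_coords.mpr ⟨t, ht0, ht1⟩
  have hkb : ((C 0 - P 0) * (A 1 - P 1) - (C 1 - P 1) * (A 0 - P 0)) ≠ 0 := by
    intro h
    apply hPb
    have hx : ¬(A 0 - C 0 = 0 ∧ A 1 - C 1 = 0) := by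
      rintro ⟨h0, h1⟩; exact hCA (pt_ext (by linarith) (by linarith))
    obtain ⟨t, ht0, ht1⟩ := vec_decomp (x0 := A 0 - C 0) (x1 := A 1 - C 1)
      (y0 := P 0 - C 0) (y1 := P 1 - C 1) (by linear_combination h) hx
    exact line_coords.mpr ⟨t, ht0, ht1⟩
  have hkc : ((A 0 - P 0) * (B 1 - P 1) - (A 1 - P 1) * (B 0 - P 0)) ≠ 0 := by
    intro h
    apply hPc
    have hx : ¬(B 0 - A 0 = 0 ∧ B 1 - A 1 = 0) := by
      rintro ⟨h0, h1⟩; exact hAB (pt_ext (by linarith) (by linarith))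
    obtain ⟨t, ht0, ht1⟩ := vec_decomp (x0 := B 0 - A 0) (x1 := B 1 - A 1)
      (y0 := P 0 - A 0) (y1 := P 1 - A 1) (by linear_combination h) hx
    exact line_coords.mpr ⟨t, ht0, ht1⟩
  have hS : ((B 0 - P 0) * (C 1 - P 1) - (B 1 - P 1) * (C 0 - P 0)) + ((C 0 - P 0) * (A 1 - P 1) - (C 1 - P 1) * (A 0 - P 0)) + ((A 0 - P 0) * (B 1 - P 1) - (A 1 - P 1) * (B 0 - P 0)) ≠ 0 := by
    intro h
    apply hncol
    have hx : ¬(B 0 - A 0 = 0 ∧ B 1 - A 1 = 0) := by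
      rintro ⟨h0, h1⟩; exact hAB (pt_ext (by linarith) (by linarith))
    obtain ⟨t, ht0, ht1⟩ := vec_decomp (x0 := B 0 - A 0) (x1 := B 1 - A 1)
      (y0 := C 0 - A 0) (y1 := C 1 - A 1) (by linear_combination h) hx
    exact collinear_coords t ht0 ht1
  have hqa : ((A 0 - P 0) ^ 2 + (A 1 - P 1) ^ 2) ≠ 0 := by
    intro h
    apply hkb
    have h0 : A 0 - P 0 = 0 := by nlinarith [sq_nonneg (A 0 - P 0), sq_nonneg (A 1 - P 1)]
    have h1 : A 1 - P 1 = 0 := by nlinarith [sq_nonneg (A 0 - P 0), sq_nonneg (A 1 - P 1)]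
    rw [h0, h1]; ring
  have hqb : ((B 0 - P 0) ^ 2 + (B 1 - P 1) ^ 2) ≠ 0 := by
    intro h
    apply hkc
    have h0 : B 0 - P 0 = 0 := by nlinarith [sq_nonneg (B 0 - P 0), sq_nonneg (B 1 - P 1)]
    have h1 : B 1 - P 1 = 0 := by nlinarith [sq_nonneg (B 0 - P 0), sq_nonneg (B 1 - P 1)]
    rw [h0, h1]; ring
  have hqc : ((C 0 - P 0) ^ 2 + (C 1 - P 1) ^ 2) ≠ 0 := by
    intro h
    apply hka
    have h0 : C 0 - P 0 = 0 := by nlinarith [sq_nonneg (C 0 - P 0), sq_nonneg (C 1 - P 1)]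
    have h1 : C 1 - P 1 = 0 := by nlinarith [sq_nonneg (C 0 - P 0), sq_nonneg (C 1 - P 1)]
    rw [h0, h1]; ring
  -- Cevian feet : parameters along the Cevian lines and the Cevian relations
  obtain ⟨tL, hL0c, hL1c⟩ := line_coords.mp hL1
  have el0 : L 0 - P 0 = (1 - tL) * (A 0 - P 0) := by linear_combination hL0c
  have el1 : L 1 - P 1 = (1 - tL) * (A 1 - P 1) := by linear_combination hL1c
  obtain ⟨sL, hsL0, hsL1⟩ := line_coords.mp hL2
  have fl0 : L 0 - P 0 - (B 0 - P 0) = sL * (C 0 - P 0 - (B 0 - P 0)) := by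
    linear_combination hsL0
  have fl1 : L 1 - P 1 - (B 1 - P 1) = sL * (C 1 - P 1 - (B 1 - P 1)) := by
    linear_combination hsL1
  have hl := cev_rel (A 0 - P 0) (A 1 - P 1) (B 0 - P 0) (B 1 - P 1) (C 0 - P 0) (C 1 - P 1)
    (1 - tL) sL (L 0 - P 0) (L 1 - P 1) el0 el1 fl0 fl1
  obtain ⟨tM, hM0c, hM1c⟩ := line_coords.mp hM1
  have em0 : M 0 - P 0 = (1 - tM) * (B 0 - P 0) := by linear_combination hM0c
  have em1 : M 1 - P 1 = (1 - tM) * (B 1 - P 1) := by linear_combination hM1c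
  obtain ⟨sM, hsM0, hsM1⟩ := line_coords.mp hM2
  have fm0 : M 0 - P 0 - (C 0 - P 0) = sM * (A 0 - P 0 - (C 0 - P 0)) := by
    linear_combination hsM0
  have fm1 : M 1 - P 1 - (C 1 - P 1) = sM * (A 1 - P 1 - (C 1 - P 1)) := by
    linear_combination hsM1
  have hm := cev_rel (B 0 - P 0) (B 1 - P 1) (C 0 - P 0) (C 1 - P 1) (A 0 - P 0) (A 1 - P 1)
    (1 - tM) sM (M 0 - P 0) (M 1 - P 1) em0 em1 fm0 fm1
  obtain ⟨tN, hN0c, hN1c⟩ := line_coords.mp hN1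
  have en0 : N 0 - P 0 = (1 - tN) * (C 0 - P 0) := by linear_combination hN0c
  have en1 : N 1 - P 1 = (1 - tN) * (C 1 - P 1) := by linear_combination hN1c
  obtain ⟨sN, hsN0, hsN1⟩ := line_coords.mp hN2
  have fn0 : N 0 - P 0 - (A 0 - P 0) = sN * (B 0 - P 0 - (A 0 - P 0)) := by
    linear_combination hsN0
  have fn1 : N 1 - P 1 - (A 1 - P 1) = sN * (B 1 - P 1 - (A 1 - P 1)) := by
    linear_combination hsN1
  have hn := cev_rel (C 0 - P 0) (C 1 - P 1) (A 0 - P 0) (A 1 - P 1) (B 0 - P 0) (B 1 - P 1)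
    (1 - tN) sN (N 0 - P 0) (N 1 - P 1) en0 en1 fn0 fn1
  -- power of P with respect to the circle AMN
  have eAM : (M 0 - P 0 - (sA.center 0 - P 0)) ^ 2 + (M 1 - P 1 - (sA.center 1 - P 1)) ^ 2 =
      (A 0 - P 0 - (sA.center 0 - P 0)) ^ 2 + (A 1 - P 1 - (sA.center 1 - P 1)) ^ 2 := by
    have h1 : dist M sA.center ^ 2 = dist A sA.center ^ 2 := by
      rw [EuclideanGeometry.mem_sphere.mp hsA2, EuclideanGeometry.mem_sphere.mp hsA1]
    rw [dist_sq_coords, dist_sq_coords] at h1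
    linear_combination h1
  have eAN : (N 0 - P 0 - (sA.center 0 - P 0)) ^ 2 + (N 1 - P 1 - (sA.center 1 - P 1)) ^ 2 =
      (A 0 - P 0 - (sA.center 0 - P 0)) ^ 2 + (A 1 - P 1 - (sA.center 1 - P 1)) ^ 2 := by
    have h1 : dist N sA.center ^ 2 = dist A sA.center ^ 2 := by
      rw [EuclideanGeometry.mem_sphere.mp hsA3, EuclideanGeometry.mem_sphere.mp hsA1]
    rw [dist_sq_coords, dist_sq_coords] at h1
    linear_combination h1
  rw [em0, em1] at eAM
  rw [en0, en1] at eAN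
  have powA := powthree3 (A 0 - P 0) (A 1 - P 1) ((1 - tM) * (B 0 - P 0)) ((1 - tM) * (B 1 - P 1))
    ((1 - tN) * (C 0 - P 0)) ((1 - tN) * (C 1 - P 1))
    (sA.center 0 - P 0) (sA.center 1 - P 1) eAM eAN
  have h4 : (2 * ((A 0 - P 0) * (sA.center 0 - P 0) + (A 1 - P 1) * (sA.center 1 - P 1)) - ((A 0 - P 0) ^ 2 + (A 1 - P 1) ^ 2)) * ((1 - tM) * (1 - tN) * ((B 0 - P 0) * (C 1 - P 1) - (B 1 - P 1) * (C 0 - P 0)) + (1 - tN) * ((C 0 - P 0) * (A 1 - P 1) - (C 1 - P 1) * (A 0 - P 0)) + (1 - tM) * ((A 0 - P 0) * (B 1 - P 1) - (A 1 - P 1) * (B 0 - P 0))) =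
      -((1 - tM) * (1 - tN) * (((B 0 - P 0) * (C 1 - P 1) - (B 1 - P 1) * (C 0 - P 0)) * ((A 0 - P 0) ^ 2 + (A 1 - P 1) ^ 2) + (1 - tM) * ((C 0 - P 0) * (A 1 - P 1) - (C 1 - P 1) * (A 0 - P 0)) * ((B 0 - P 0) ^ 2 + (B 1 - P 1) ^ 2) + (1 - tN) * ((A 0 - P 0) * (B 1 - P 1) - (A 1 - P 1) * (B 0 - P 0)) * ((C 0 - P 0) ^ 2 + (C 1 - P 1) ^ 2))) := by
    linear_combination powA
  -- power of P with respect to the circle BNL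
  have eBN : (N 0 - P 0 - (sB.center 0 - P 0)) ^ 2 + (N 1 - P 1 - (sB.center 1 - P 1)) ^ 2 =
      (B 0 - P 0 - (sB.center 0 - P 0)) ^ 2 + (B 1 - P 1 - (sB.center 1 - P 1)) ^ 2 := by
    have h1 : dist N sB.center ^ 2 = dist B sB.center ^ 2 := by
      rw [EuclideanGeometry.mem_sphere.mp hsB2, EuclideanGeometry.mem_sphere.mp hsB1]
    rw [dist_sq_coords, dist_sq_coords] at h1
    linear_combination h1
  have eBL : (L 0 - P 0 - (sB.center 0 - P 0)) ^ 2 + (L 1 - P 1 - (sB.center 1 - P 1)) ^ 2 =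
      (B 0 - P 0 - (sB.center 0 - P 0)) ^ 2 + (B 1 - P 1 - (sB.center 1 - P 1)) ^ 2 := by
    have h1 : dist L sB.center ^ 2 = dist B sB.center ^ 2 := by
      rw [EuclideanGeometry.mem_sphere.mp hsB3, EuclideanGeometry.mem_sphere.mp hsB1]
    rw [dist_sq_coords, dist_sq_coords] at h1
    linear_combination h1
  rw [en0, en1] at eBN
  rw [el0, el1] at eBL
  have powB := powthree3 (B 0 - P 0) (B 1 - P 1) ((1 - tN) * (C 0 - P 0)) ((1 - tN) * (C 1 - P 1))
    ((1 - tL) * (A 0 - P 0)) ((1 - tL) * (A 1 - P 1))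
    (sB.center 0 - P 0) (sB.center 1 - P 1) eBN eBL
  have h5 : (2 * ((B 0 - P 0) * (sB.center 0 - P 0) + (B 1 - P 1) * (sB.center 1 - P 1)) - ((B 0 - P 0) ^ 2 + (B 1 - P 1) ^ 2)) * ((1 - tN) * (1 - tL) * ((C 0 - P 0) * (A 1 - P 1) - (C 1 - P 1) * (A 0 - P 0)) + (1 - tL) * ((A 0 - P 0) * (B 1 - P 1) - (A 1 - P 1) * (B 0 - P 0)) + (1 - tN) * ((B 0 - P 0) * (C 1 - P 1) - (B 1 - P 1) * (C 0 - P 0))) =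
      -((1 - tN) * (1 - tL) * (((C 0 - P 0) * (A 1 - P 1) - (C 1 - P 1) * (A 0 - P 0)) * ((B 0 - P 0) ^ 2 + (B 1 - P 1) ^ 2) + (1 - tN) * ((A 0 - P 0) * (B 1 - P 1) - (A 1 - P 1) * (B 0 - P 0)) * ((C 0 - P 0) ^ 2 + (C 1 - P 1) ^ 2) + (1 - tL) * ((B 0 - P 0) * (C 1 - P 1) - (B 1 - P 1) * (C 0 - P 0)) * ((A 0 - P 0) ^ 2 + (A 1 - P 1) ^ 2))) := by
    linear_combination powB
  -- power of P with respect to the circle CLM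
  have eCL : (L 0 - P 0 - (sC.center 0 - P 0)) ^ 2 + (L 1 - P 1 - (sC.center 1 - P 1)) ^ 2 =
      (C 0 - P 0 - (sC.center 0 - P 0)) ^ 2 + (C 1 - P 1 - (sC.center 1 - P 1)) ^ 2 := by
    have h1 : dist L sC.center ^ 2 = dist C sC.center ^ 2 := by
      rw [EuclideanGeometry.mem_sphere.mp hsC2, EuclideanGeometry.mem_sphere.mp hsC1]
    rw [dist_sq_coords, dist_sq_coords] at h1
    linear_combination h1
  have eCM : (M 0 - P 0 - (sC.center 0 - P 0)) ^ 2 + (M 1 - P 1 - (sC.center 1 - P 1)) ^ 2 =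
      (C 0 - P 0 - (sC.center 0 - P 0)) ^ 2 + (C 1 - P 1 - (sC.center 1 - P 1)) ^ 2 := by
    have h1 : dist M sC.center ^ 2 = dist C sC.center ^ 2 := by
      rw [EuclideanGeometry.mem_sphere.mp hsC3, EuclideanGeometry.mem_sphere.mp hsC1]
    rw [dist_sq_coords, dist_sq_coords] at h1
    linear_combination h1
  rw [el0, el1] at eCL
  rw [em0, em1] at eCM
  have powC := powthree3 (C 0 - P 0) (C 1 - P 1) ((1 - tL) * (A 0 - P 0)) ((1 - tL) * (A 1 - P 1))
    ((1 - tM) * (B 0 - P 0)) ((1 - tM) * (B 1 - P 1))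
    (sC.center 0 - P 0) (sC.center 1 - P 1) eCL eCM
  have h6 : (2 * ((C 0 - P 0) * (sC.center 0 - P 0) + (C 1 - P 1) * (sC.center 1 - P 1)) - ((C 0 - P 0) ^ 2 + (C 1 - P 1) ^ 2)) * ((1 - tL) * (1 - tM) * ((A 0 - P 0) * (B 1 - P 1) - (A 1 - P 1) * (B 0 - P 0)) + (1 - tM) * ((B 0 - P 0) * (C 1 - P 1) - (B 1 - P 1) * (C 0 - P 0)) + (1 - tL) * ((C 0 - P 0) * (A 1 - P 1) - (C 1 - P 1) * (A 0 - P 0))) =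
      -((1 - tL) * (1 - tM) * (((A 0 - P 0) * (B 1 - P 1) - (A 1 - P 1) * (B 0 - P 0)) * ((C 0 - P 0) ^ 2 + (C 1 - P 1) ^ 2) + (1 - tL) * ((B 0 - P 0) * (C 1 - P 1) - (B 1 - P 1) * (C 0 - P 0)) * ((A 0 - P 0) ^ 2 + (A 1 - P 1) ^ 2) + (1 - tM) * ((C 0 - P 0) * (A 1 - P 1) - (C 1 - P 1) * (A 0 - P 0)) * ((B 0 - P 0) ^ 2 + (B 1 - P 1) ^ 2))) := by
    linear_combination powC
  -- the fundamental identity of the three powers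
  have hdia := diamond ((B 0 - P 0) * (C 1 - P 1) - (B 1 - P 1) * (C 0 - P 0)) ((C 0 - P 0) * (A 1 - P 1) - (C 1 - P 1) * (A 0 - P 0)) ((A 0 - P 0) * (B 1 - P 1) - (A 1 - P 1) * (B 0 - P 0)) ((A 0 - P 0) ^ 2 + (A 1 - P 1) ^ 2) ((B 0 - P 0) ^ 2 + (B 1 - P 1) ^ 2) ((C 0 - P 0) ^ 2 + (C 1 - P 1) ^ 2) (1 - tL) (1 - tM) (1 - tN)
    (2 * ((A 0 - P 0) * (sA.center 0 - P 0) + (A 1 - P 1) * (sA.center 1 - P 1)) - ((A 0 - P 0) ^ 2 + (A 1 - P 1) ^ 2)) (2 * ((B 0 - P 0) * (sB.center 0 - P 0) + (B 1 - P 1) * (sB.center 1 - P 1)) - ((B 0 - P 0) ^ 2 + (B 1 - P 1) ^ 2)) (2 * ((C 0 - P 0) * (sC.center 0 - P 0) + (C 1 - P 1) * (sC.center 1 - P 1)) - ((C 0 - P 0) ^ 2 + (C 1 - P 1) ^ 2)) hka hkb hkc hS hl hm hn h4 h5 h6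
  -- second intersections
  obtain ⟨σa, eu0, eu1, hUq⟩ := second_inter_sigma A P U sA hsA1 hU2 hU1 hU3 hqa
  obtain ⟨σb, ev0, ev1, hVq⟩ := second_inter_sigma B P V sB hsB1 hV2 hV1 hV3 hqb
  obtain ⟨σc, ew0, ew1, hWq⟩ := second_inter_sigma C P W sC hsC1 hW2 hW1 hW3 hqc
  have hdiam : ((B 0 - P 0) * (C 1 - P 1) - (B 1 - P 1) * (C 0 - P 0)) * (σa * ((A 0 - P 0) ^ 2 + (A 1 - P 1) ^ 2)) + ((C 0 - P 0) * (A 1 - P 1) - (C 1 - P 1) * (A 0 - P 0)) * (σb * ((B 0 - P 0) ^ 2 + (B 1 - P 1) ^ 2)) + ((A 0 - P 0) * (B 1 - P 1) - (A 1 - P 1) * (B 0 - P 0)) * (σc * ((C 0 - P 0) ^ 2 + (C 1 - P 1) ^ 2)) = 0 := by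
    linear_combination hdia + ((B 0 - P 0) * (C 1 - P 1) - (B 1 - P 1) * (C 0 - P 0)) * hUq + ((C 0 - P 0) * (A 1 - P 1) - (C 1 - P 1) * (A 0 - P 0)) * hVq + ((A 0 - P 0) * (B 1 - P 1) - (A 1 - P 1) * (B 0 - P 0)) * hWq
  -- U, V, W are not collinear, in coordinates
  have hDetRaw : (V 0 - U 0) * (W 1 - U 1) - (V 1 - U 1) * (W 0 - U 0) ≠ 0 := by
    intro h
    apply hUVW
    by_cases hVU : V = U
    · exact Collinear.subset
        (by intro x hx; simp at hx ⊢; rcases hx with h' | h' | h' <;> simp [h', hVU])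
        (collinear_pair ℝ U W)
    · have hx : ¬(V 0 - U 0 = 0 ∧ V 1 - U 1 = 0) := by
        rintro ⟨h0, h1⟩; exact hVU (pt_ext (by linarith) (by linarith))
      obtain ⟨t, ht0, ht1⟩ := vec_decomp (x0 := V 0 - U 0) (x1 := V 1 - U 1)
        (y0 := W 0 - U 0) (y1 := W 1 - U 1) (by linear_combination h) hx
      exact collinear_coords t ht0 ht1
  have hdet : (σb * (B 0 - P 0) - σa * (A 0 - P 0)) * (σc * (C 1 - P 1) - σa * (A 1 - P 1)) -
      (σb * (B 1 - P 1) - σa * (A 1 - P 1)) * (σc * (C 0 - P 0) - σa * (A 0 - P 0)) ≠ 0 := by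
    intro h
    apply hDetRaw
    linear_combination h + (W 1 - U 1) * (ev0 - eu0)
      + (σb * (B 0 - P 0) - σa * (A 0 - P 0)) * (ew1 - eu1)
      - (W 0 - U 0) * (ev1 - eu1)
      - (σb * (B 1 - P 1) - σa * (A 1 - P 1)) * (ew0 - eu0)
  -- membership of U, V, W in s, in coordinates
  have hu_raw : (U 0 - P 0 - (s.center 0 - P 0)) ^ 2 + (U 1 - P 1 - (s.center 1 - P 1)) ^ 2 =
      s.radius ^ 2 := by
    have h1 : dist U s.center ^ 2 = s.radius ^ 2 := by rw [EuclideanGeometry.mem_sphere.mp hsU]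
    rw [dist_sq_coords] at h1
    linear_combination h1
  have hv_raw : (V 0 - P 0 - (s.center 0 - P 0)) ^ 2 + (V 1 - P 1 - (s.center 1 - P 1)) ^ 2 =
      s.radius ^ 2 := by
    have h1 : dist V s.center ^ 2 = s.radius ^ 2 := by rw [EuclideanGeometry.mem_sphere.mp hsV]
    rw [dist_sq_coords] at h1
    linear_combination h1
  have hw_raw : (W 0 - P 0 - (s.center 0 - P 0)) ^ 2 + (W 1 - P 1 - (s.center 1 - P 1)) ^ 2 =
      s.radius ^ 2 := by
    have h1 : dist W s.center ^ 2 = s.radius ^ 2 := by rw [EuclideanGeometry.mem_sphere.mp hsW]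
    rw [dist_sq_coords] at h1
    linear_combination h1
  rw [eu0, eu1] at hu_raw
  rw [ev0, ev1] at hv_raw
  rw [ew0, ew1] at hw_raw
  have hfin := assembly (A 0 - P 0) (A 1 - P 1) (B 0 - P 0) (B 1 - P 1) (C 0 - P 0) (C 1 - P 1)
    σa σb σc (s.center 0 - P 0) (s.center 1 - P 1) (s.radius ^ 2)
    hu_raw hv_raw hw_raw hdiam hdet
  have hrad : 0 ≤ s.radius := by
    rw [← EuclideanGeometry.mem_sphere.mp hsU]; exact dist_nonneg
  have hd2 : dist P s.center ^ 2 = s.radius ^ 2 := by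
    rw [dist_sq_coords]; linear_combination hfin
  have hd : dist P s.center = s.radius := by
    have h1 : dist P s.center = Real.sqrt (dist P s.center ^ 2) := (Real.sqrt_sq dist_nonneg).symm
    rw [h1, hd2, Real.sqrt_sq hrad]
  exact EuclideanGeometry.mem_sphere.mpr hd
end
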